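/- arXiv:1604.03825 — 5 statements merged into one kernel-verified Lean document; each statement's English description precedes it below -/
import Mathlib

section
/- Let u be a classical solution of ∂_t u = Δu + f(t,u) on (0,∞)×ℝ^N whose initial datum u₀ is nonnegative, continuous, not identically zero, and supported in the open ball B_δ, and assume u satisfies the invasion property with level Z. Then for every θ ∈ (0,Z) there exists t₀ > 0 such that for all t ≥ t₀ one has 0 ≤ ℛ^e_θ(t) − ℛ^i_θ(t) ≤ δπ. -/
open scoped RealInnerProductSpace


open Filter Metric Set
open scoped ENNReal NNReal

/-- The Laplacian of a function on Euclidean space, as the sum of second partial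
derivatives in the coordinate directions. -/
noncomputable def laplacian {N : ℕ} (φ : EuclideanSpace ℝ (Fin N) → ℝ)
    (x : EuclideanSpace ℝ (Fin N)) : ℝ :=
  ∑ i : Fin N, fderiv ℝ (fun y => fderiv ℝ φ y (EuclideanSpace.single i (1:ℝ))) x
    (EuclideanSpace.single i (1:ℝ))

/-- Standing assumptions: `f (t, z)` is Hölder continuous in `t`, Lipschitz continuous
in `z` uniformly in `t`, and `f (t, 0) = 0` for all `t > 0`. -/
def StandingAssumptions (f : ℝ → ℝ → ℝ) : Prop :=
  (∃ a : ℝ, 0 < a ∧ a ≤ 1 ∧ ∃ C : ℝ, ∀ z : ℝ, ∀ t ∈ Set.Ioi (0:ℝ), ∀ s ∈ Set.Ioi (0:ℝ),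
    |f t z - f s z| ≤ C * |t - s| ^ a) ∧
  (∃ L : ℝ≥0, ∀ t > (0:ℝ), LipschitzWith L (fun z => f t z)) ∧
  (∀ t > (0:ℝ), f t 0 = 0)

/-- A classical solution of `∂ₜ u = Δu + f(t,u)` on `(0,∞) × ℝᴺ` with initial datum `u₀`:
continuous on `[0,∞) × ℝᴺ`, bounded on `[0,T] × ℝᴺ` for every `T > 0`, `C¹` in `t` and
`C²` in `x` for `t > 0`, satisfying the equation pointwise for `t > 0`, and `u(0,·) = u₀`. -/
structure IsClassicalSolution {N : ℕ} (f : ℝ → ℝ → ℝ)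
    (u : ℝ → EuclideanSpace ℝ (Fin N) → ℝ)
    (u₀ : EuclideanSpace ℝ (Fin N) → ℝ) : Prop where
  cont : ContinuousOn (Function.uncurry u)
    (Set.Ici (0:ℝ) ×ˢ (Set.univ : Set (EuclideanSpace ℝ (Fin N))))
  bounded : ∀ T > (0:ℝ), ∃ C : ℝ, ∀ t ∈ Set.Icc (0:ℝ) T, ∀ x, |u t x| ≤ C
  time_diff : ∀ x, ∀ t > (0:ℝ), DifferentiableAt ℝ (fun s => u s x) t
  space_smooth : ∀ t > (0:ℝ), ContDiff ℝ 2 (u t)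
  eqn : ∀ t > (0:ℝ), ∀ x, deriv (fun s => u s x) t = laplacian (u t) x + f t (u t x)
  init : u 0 = u₀

/-- Invasion property with level `Z ∈ (0, +∞]`: for every compact `K`,
`liminf_{t→∞} min_{x ∈ K} u (t, x) ≥ Z`, i.e. for every real `z` (strictly) below `Z`,
eventually `u (t, ·) ≥ z` on `K`. -/
def Invades {N : ℕ} (u : ℝ → EuclideanSpace ℝ (Fin N) → ℝ) (Z : ℝ≥0∞) : Prop :=
  ∀ z : ℝ, ENNReal.ofReal z < Z →
    ∀ K : Set (EuclideanSpace ℝ (Fin N)), IsCompact K →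
      ∃ t₀ : ℝ, ∀ t ≥ t₀, ∀ x ∈ K, z ≤ u t x

/-- The upper level set `U_θ(t) = {x : u (t, x) > θ}`. -/
def upperLevelSet {N : ℕ} (u : ℝ → EuclideanSpace ℝ (Fin N) → ℝ) (θ t : ℝ) :
    Set (EuclideanSpace ℝ (Fin N)) := {x | θ < u t x}

/-- The inner radius `ℛⁱ_θ(t)`: the supremum of radii of balls contained in the upper
level set `U_θ(t)`. -/
noncomputable def innerRadius {N : ℕ} (u : ℝ → EuclideanSpace ℝ (Fin N) → ℝ)
    (θ t : ℝ) : ℝ :=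
  sSup {r : ℝ | ∃ x₀, ∀ x ∈ Metric.ball x₀ r, θ < u t x}

/-- The outer radius `ℛᵉ_θ(t)`: the infimum of radii of balls containing the upper
level set `U_θ(t)`. -/
noncomputable def outerRadius {N : ℕ} (u : ℝ → EuclideanSpace ℝ (Fin N) → ℝ)
    (θ t : ℝ) : ℝ :=
  sInf {r : ℝ | 0 < r ∧ ∃ x₀, ∀ x ∉ Metric.ball x₀ r, u t x ≤ θ}

/-- The centered inscribed radius `r_θ(t)`: the supremum of radii `r` such that
`u (t, ·) > θ` on the centered ball `B_r(0)` (equal to `0` if no positive `r` works). -/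
noncomputable def centeredRadius {N : ℕ} (u : ℝ → EuclideanSpace ℝ (Fin N) → ℝ)
    (θ t : ℝ) : ℝ :=
  sSup {r : ℝ | ∀ x : EuclideanSpace ℝ (Fin N), ‖x‖ < r → θ < u t x}

/-- Hypothesis (f≥g): `f(t,z) ≥ g(z)` with `g` continuous, `g ≤ 0` on `(0,θ₀)`,
`g > 0` on `(θ₀,Z)` and `∫₀^Z g > 0`. -/
def HypFG (f : ℝ → ℝ → ℝ) (g : ℝ → ℝ) (θ₀ Z : ℝ) : Prop :=
  ContinuousOn g (Set.Ici 0) ∧ (∀ t ≥ (0:ℝ), ∀ z ≥ (0:ℝ), g z ≤ f t z) ∧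
  0 < θ₀ ∧ θ₀ < Z ∧ (∀ z ∈ Set.Ioo 0 θ₀, g z ≤ 0) ∧ (∀ z ∈ Set.Ioo θ₀ Z, 0 < g z) ∧
  0 < ∫ z in (0:ℝ)..Z, g z

/-- Hypothesis (KPP): `inf_{t>0} f(t,z) > 0` for every `z ∈ (0,Z)` and
`z ↦ f(t,z)/z` is nonincreasing on `(0,∞)` for every `t > 0`. -/
def HypKPP (f : ℝ → ℝ → ℝ) (Z : ℝ) : Prop :=
  0 < Z ∧ (∀ z ∈ Set.Ioo 0 Z, ∃ ε > (0:ℝ), ∀ t > (0:ℝ), ε ≤ f t z) ∧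
  (∀ t > (0:ℝ), AntitoneOn (fun z => f t z / z) (Set.Ioi 0))


namespace AuxPDE


variable {N : ℕ}

local notation "E" => EuclideanSpace ℝ (Fin N)

lemma diff_of_c2 {φ : E → ℝ} (hφ : ContDiff ℝ 2 φ) : Differentiable ℝ φ :=
  hφ.differentiable (by norm_num)

lemma fderiv_c1 {φ : E → ℝ} (hφ : ContDiff ℝ 2 φ) : ContDiff ℝ 1 (fderiv ℝ φ) :=
  hφ.fderiv_right (by norm_num)

lemma fderiv_apply_c1 {φ : E → ℝ} (hφ : ContDiff ℝ 2 φ) (v : E) :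
    ContDiff ℝ 1 (fun y => fderiv ℝ φ y v) :=
  (fderiv_c1 hφ).clm_apply contDiff_const

lemma fderiv_fderiv_apply {φ : E → ℝ} (hφ : ContDiff ℝ 2 φ) (x v w : E) :
    fderiv ℝ (fun y => fderiv ℝ φ y v) x w = fderiv ℝ (fderiv ℝ φ) x w v := by
  rw [fderiv_clm_apply ((fderiv_c1 hφ).differentiable one_ne_zero x) (differentiableAt_const v)]
  simp

lemma laplacian_eq {φ : E → ℝ} (hφ : ContDiff ℝ 2 φ) (x : E) :
    laplacian φ x = ∑ i : Fin N,
      fderiv ℝ (fderiv ℝ φ) x (EuclideanSpace.single i (1:ℝ)) (EuclideanSpace.single i (1:ℝ)) := by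
  unfold laplacian
  exact Finset.sum_congr rfl fun i _ => fderiv_fderiv_apply hφ x _ _

lemma lap_add {φ ψ : E → ℝ} (hφ : ContDiff ℝ 2 φ) (hψ : ContDiff ℝ 2 ψ) (x : E) :
    laplacian (fun y => φ y + ψ y) x = laplacian φ x + laplacian ψ x := by
  unfold laplacian
  rw [← Finset.sum_add_distrib]
  refine Finset.sum_congr rfl fun i _ => ?_
  set v := EuclideanSpace.single (𝕜 := ℝ) i (1:ℝ)
  have h1 : (fun y => fderiv ℝ (fun z => φ z + ψ z) y v)
      = fun y => fderiv ℝ φ y v + fderiv ℝ ψ y v := by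
    funext y
    rw [fderiv_fun_add (diff_of_c2 hφ y) (diff_of_c2 hψ y)]
    rfl
  rw [h1, fderiv_fun_add ((fderiv_apply_c1 hφ v).differentiable one_ne_zero x)
    ((fderiv_apply_c1 hψ v).differentiable one_ne_zero x)]
  rfl

lemma lap_sub {φ ψ : E → ℝ} (hφ : ContDiff ℝ 2 φ) (hψ : ContDiff ℝ 2 ψ) (x : E) :
    laplacian (fun y => φ y - ψ y) x = laplacian φ x - laplacian ψ x := by
  unfold laplacian
  rw [← Finset.sum_sub_distrib]
  refine Finset.sum_congr rfl fun i _ => ?_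
  set v := EuclideanSpace.single (𝕜 := ℝ) i (1:ℝ)
  have h1 : (fun y => fderiv ℝ (fun z => φ z - ψ z) y v)
      = fun y => fderiv ℝ φ y v - fderiv ℝ ψ y v := by
    funext y
    rw [fderiv_fun_sub (diff_of_c2 hφ y) (diff_of_c2 hψ y)]
    rfl
  rw [h1, fderiv_fun_sub ((fderiv_apply_c1 hφ v).differentiable one_ne_zero x)
    ((fderiv_apply_c1 hψ v).differentiable one_ne_zero x)]
  rfl

lemma lap_const_mul {φ : E → ℝ} (hφ : ContDiff ℝ 2 φ) (c : ℝ) (x : E) :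
    laplacian (fun y => c * φ y) x = c * laplacian φ x := by
  unfold laplacian
  rw [Finset.mul_sum]
  refine Finset.sum_congr rfl fun i _ => ?_
  set v := EuclideanSpace.single (𝕜 := ℝ) i (1:ℝ)
  have h1 : (fun y => fderiv ℝ (fun z => c * φ z) y v)
      = fun y => c * fderiv ℝ φ y v := by
    funext y
    rw [fderiv_const_mul (diff_of_c2 hφ y)]
    rfl
  rw [h1, fderiv_const_mul ((fderiv_apply_c1 hφ v).differentiable one_ne_zero x)]
  rfl



noncomputable def Q : EuclideanSpace ℝ (Fin N) → ℝ := fun x => 1 + ∑ i : Fin N, x i * x i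

lemma Q_contDiff : ContDiff ℝ 2 (Q (N := N)) := by
  refine contDiff_const.add (ContDiff.sum fun i _ => ?_)
  exact ((EuclideanSpace.proj (𝕜 := ℝ) i).contDiff).mul (EuclideanSpace.proj (𝕜 := ℝ) i).contDiff

lemma Q_ge_one (x : E) : 1 ≤ Q x := by
  have : (0:ℝ) ≤ ∑ i : Fin N, x i * x i :=
    Finset.sum_nonneg fun i _ => mul_self_nonneg _
  simp [Q]; linarith

lemma Q_eq_one_add_norm_sq (x : E) : Q x = 1 + ‖x‖ ^ 2 := by
  have h : ‖x‖ ^ 2 = ∑ i : Fin N, x i * x i := by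
    rw [EuclideanSpace.norm_eq, Real.sq_sqrt (Finset.sum_nonneg fun i _ => sq_nonneg _)]
    exact Finset.sum_congr rfl fun i _ => by rw [Real.norm_eq_abs, sq_abs, sq]
  rw [Q, h]

lemma hasFDerivAt_Q (y : E) :
    HasFDerivAt (Q (N := N))
      (∑ i : Fin N, (y i • EuclideanSpace.proj (𝕜 := ℝ) i + y i • EuclideanSpace.proj (𝕜 := ℝ) i)) y := by
  refine HasFDerivAt.const_add (c := 1) ?_
  exact HasFDerivAt.fun_sum fun i _ =>
    ((EuclideanSpace.proj (𝕜 := ℝ) i).hasFDerivAt (x := y)).mul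
      ((EuclideanSpace.proj (𝕜 := ℝ) i).hasFDerivAt (x := y))

lemma fderiv_Q_apply (y : E) (j : Fin N) :
    fderiv ℝ (Q (N := N)) y (EuclideanSpace.single j (1:ℝ)) = 2 * y j := by
  rw [(hasFDerivAt_Q y).fderiv]
  simp only [ContinuousLinearMap.sum_apply, ContinuousLinearMap.add_apply,
    ContinuousLinearMap.smul_apply, EuclideanSpace.single_apply,
    smul_eq_mul]
  rw [Finset.sum_eq_single j]
  · simp; ring
  · intro b _ hb; simp [hb]
  · intro h; exact absurd (Finset.mem_univ j) h

lemma lap_Q (x : E) : laplacian (Q (N := N)) x = 2 * N := by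
  unfold laplacian
  have key : ∀ j : Fin N,
      fderiv ℝ (fun y => fderiv ℝ (Q (N := N)) y (EuclideanSpace.single j (1:ℝ))) x
        (EuclideanSpace.single j (1:ℝ)) = 2 := by
    intro j
    have h1 : (fun y : E => fderiv ℝ (Q (N := N)) y (EuclideanSpace.single j (1:ℝ)))
        = fun y : E => 2 * (EuclideanSpace.proj (𝕜 := ℝ) j) y := by
      funext y; rw [fderiv_Q_apply]; rfl
    rw [h1, ((EuclideanSpace.proj (𝕜 := ℝ) j).hasFDerivAt.const_mul (2:ℝ)).fderiv]
    simp [EuclideanSpace.single_apply]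
  rw [Finset.sum_congr rfl fun j _ => key j]
  simp [mul_comm]




/-- The reflection across the hyperplane `⟪e,·⟫ = 0`, as a continuous linear map. -/
noncomputable def reflCLM (e : E) : EuclideanSpace ℝ (Fin N) →L[ℝ] EuclideanSpace ℝ (Fin N) :=
  ContinuousLinearMap.id ℝ _ - (2:ℝ) • ((innerSL ℝ e).smulRight e)

lemma reflCLM_apply (e z : E) : reflCLM e z = z - (2 * ⟪e, z⟫) • e := by
  simp [reflCLM, two_smul, smul_smul, two_mul, add_smul]

lemma sum_single_smul (e : E) :
    ∑ i : Fin N, ⟪e, EuclideanSpace.single i (1:ℝ)⟫ • EuclideanSpace.single i (1:ℝ) = e := by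
  have h := (EuclideanSpace.basisFun (Fin N) ℝ).sum_repr e
  simp only [EuclideanSpace.basisFun_apply, EuclideanSpace.basisFun_repr] at h
  simp only [EuclideanSpace.inner_single_right, map_one, mul_one, starRingEnd_apply, star_trivial]
  simpa using h

lemma sum_inner_single_sq (e : E) (he : ‖e‖ = 1) :
    ∑ i : Fin N, ⟪e, EuclideanSpace.single i (1:ℝ)⟫ * ⟪e, EuclideanSpace.single i (1:ℝ)⟫ = 1 := by
  have h1 : ∀ i : Fin N, ⟪e, EuclideanSpace.single i (1:ℝ)⟫ * ⟪e, EuclideanSpace.single i (1:ℝ)⟫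
      = ⟪e, ⟪e, EuclideanSpace.single i (1:ℝ)⟫ • EuclideanSpace.single i (1:ℝ)⟫ := by
    intro i; rw [real_inner_smul_right]
  rw [Finset.sum_congr rfl fun i _ => h1 i, ← inner_sum, sum_single_smul,
    real_inner_self_eq_norm_sq, he]
  norm_num

lemma sum_B_refl (e : E) (he : ‖e‖ = 1) (B : EuclideanSpace ℝ (Fin N) →L[ℝ] EuclideanSpace ℝ (Fin N) →L[ℝ] ℝ) :
    ∑ i : Fin N, B (reflCLM e (EuclideanSpace.single i (1:ℝ))) (reflCLM e (EuclideanSpace.single i (1:ℝ)))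
      = ∑ i : Fin N, B (EuclideanSpace.single i (1:ℝ)) (EuclideanSpace.single i (1:ℝ)) := by
  set s : Fin N → E := fun i => EuclideanSpace.single i (1:ℝ) with hs
  have expand : ∀ i : Fin N,
      B (reflCLM e (s i)) (reflCLM e (s i))
        = B (s i) (s i) - (2 * ⟪e, s i⟫) * B (s i) e - (2 * ⟪e, s i⟫) * B e (s i)
          + (2 * ⟪e, s i⟫) * ((2 * ⟪e, s i⟫) * B e e) := by
    intro i
    rw [reflCLM_apply]
    simp only [map_sub, map_smul, ContinuousLinearMap.sub_apply, ContinuousLinearMap.smul_apply,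
      smul_eq_mul]
    ring
  rw [Finset.sum_congr rfl fun i _ => expand i]
  have k1 : ∑ i : Fin N, (2 * ⟪e, s i⟫) * B (s i) e = 2 * B e e := by
    have : ∀ i : Fin N, (2 * ⟪e, s i⟫) * B (s i) e = 2 * ((B (⟪e, s i⟫ • s i)) e) := by
      intro i; simp only [map_smul, ContinuousLinearMap.smul_apply, smul_eq_mul]; ring
    rw [Finset.sum_congr rfl fun i _ => this i, ← Finset.mul_sum]
    congr 1
    have : ∑ i : Fin N, (B (⟪e, s i⟫ • s i)) e = (B (∑ i : Fin N, ⟪e, s i⟫ • s i)) e := by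
      rw [map_sum]; exact (ContinuousLinearMap.sum_apply _ _ _).symm
    rw [this, sum_single_smul]
  have k2 : ∑ i : Fin N, (2 * ⟪e, s i⟫) * B e (s i) = 2 * B e e := by
    have : ∀ i : Fin N, (2 * ⟪e, s i⟫) * B e (s i) = 2 * ((B e) (⟪e, s i⟫ • s i)) := by
      intro i; simp only [map_smul, smul_eq_mul]; ring
    rw [Finset.sum_congr rfl fun i _ => this i, ← Finset.mul_sum, ← map_sum, sum_single_smul]
  have k3 : ∑ i : Fin N, (2 * ⟪e, s i⟫) * ((2 * ⟪e, s i⟫) * B e e) = 4 * B e e := by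
    have : ∀ i : Fin N, (2 * ⟪e, s i⟫) * ((2 * ⟪e, s i⟫) * B e e)
        = 4 * ((⟪e, s i⟫ * ⟪e, s i⟫) * B e e) := by intro i; ring
    rw [Finset.sum_congr rfl fun i _ => this i, ← Finset.mul_sum, ← Finset.sum_mul,
      sum_inner_single_sq e he]
    ring
  rw [Finset.sum_add_distrib, Finset.sum_sub_distrib, Finset.sum_sub_distrib, k1, k2, k3]
  simp only [hs]
  ring

/-- Laplacian is invariant under composition with the affine reflection `z ↦ reflCLM e z + b`. -/
lemma lap_comp_refl {φ : E → ℝ} (hφ : ContDiff ℝ 2 φ) (e : E) (he : ‖e‖ = 1) (b : E) (x : E) :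
    laplacian (fun z => φ (reflCLM e z + b)) x = laplacian φ (reflCLM e x + b) := by
  set A := reflCLM (N := N) e with hA
  set σ : E → E := fun z => A z + b with hσdef
  have hσ : ∀ y : E, HasFDerivAt σ A y := fun y => (A.hasFDerivAt).add_const b
  have hd2 : DifferentiableAt ℝ (fderiv ℝ φ) (σ x) :=
    ((hφ.fderiv_right (by norm_num)).differentiable one_ne_zero) (σ x)
  have hψd : ∀ y : E, fderiv ℝ (fun z => φ (σ z)) y = (fderiv ℝ φ (σ y)).comp A := by
    intro y
    exact (((diff_of_c2 hφ (σ y)).hasFDerivAt).comp y (hσ y)).fderiv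
  set B := fderiv ℝ (fderiv ℝ φ) (σ x) with hB
  have term : ∀ v : E,
      fderiv ℝ (fun y => fderiv ℝ (fun z => φ (σ z)) y v) x v = B (A v) (A v) := by
    intro v
    have h1 : (fun y => fderiv ℝ (fun z => φ (σ z)) y v) = fun y => fderiv ℝ φ (σ y) (A v) := by
      funext y; rw [hψd y]; rfl
    rw [h1]
    have hG : HasFDerivAt (fun y => fderiv ℝ φ (σ y)) (B.comp A) x :=
      (hd2.hasFDerivAt).comp x (hσ x)
    have happ : HasFDerivAt (fun y => fderiv ℝ φ (σ y) (A v))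
        ((ContinuousLinearMap.apply ℝ ℝ (A v)).comp (B.comp A)) x :=
      ((ContinuousLinearMap.apply ℝ ℝ (A v)).hasFDerivAt).comp x hG
    rw [happ.fderiv]
    rfl
  have termφ : ∀ v : E,
      fderiv ℝ (fun y => fderiv ℝ φ y v) (σ x) v = B v v := by
    intro v
    have h1 : (fun y => fderiv ℝ φ y v) = fun y => (ContinuousLinearMap.apply ℝ ℝ v) (fderiv ℝ φ y) := by
      funext y; rfl
    rw [h1]
    have happ : HasFDerivAt (fun y => (ContinuousLinearMap.apply ℝ ℝ v) (fderiv ℝ φ y))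
        ((ContinuousLinearMap.apply ℝ ℝ v).comp B) (σ x) :=
      ((ContinuousLinearMap.apply ℝ ℝ v).hasFDerivAt).comp (σ x) hd2.hasFDerivAt
    rw [happ.fderiv]
    rfl
  unfold laplacian
  rw [Finset.sum_congr rfl fun i _ => term _, Finset.sum_congr rfl fun i _ => termφ _]
  exact sum_B_refl e he B



lemma deriv2_nonneg_1d {g : ℝ → ℝ} (hg : ContDiff ℝ 2 g) (hm : IsLocalMin g 0) :
    0 ≤ deriv (deriv g) 0 := by
  by_contra hneg
  push_neg at hneg
  have hg1 : Differentiable ℝ g := hg.differentiable (by norm_num)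
  have hg' : Differentiable ℝ (deriv g) := by
    have h2 : ContDiff ℝ (1+1 : ℕ) g := by exact_mod_cast hg
    exact (((contDiff_succ_iff_deriv (n := 1)).mp (by rw [one_add_one_eq_two]; exact hg)).2.2.differentiable one_ne_zero)
  have h0 : deriv g 0 = 0 := hm.deriv_eq_zero
  have hd : HasDerivAt (deriv g) (deriv (deriv g) 0) 0 := (hg' 0).hasDerivAt
  have hslope := hasDerivAt_iff_tendsto_slope.mp hd
  have hev : ∀ᶠ r in nhdsWithin (0:ℝ) {0}ᶜ, slope (deriv g) 0 r < deriv (deriv g) 0 / 2 := by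
    have : Iio (deriv (deriv g) 0 / 2) ∈ nhds (deriv (deriv g) 0) := by
      apply Iio_mem_nhds; linarith
    exact hslope.eventually (eventually_of_mem this fun y hy => hy)
  have hev' : ∀ᶠ r in nhdsWithin (0:ℝ) (Ioi 0), deriv g r < 0 := by
    have hsub : nhdsWithin (0:ℝ) (Ioi 0) ≤ nhdsWithin (0:ℝ) {0}ᶜ :=
      nhdsWithin_mono 0 (fun r hr => ne_of_gt hr)
    filter_upwards [hev.filter_mono hsub, self_mem_nhdsWithin] with r hr hr'
    have hrpos : (0:ℝ) < r := hr'
    rw [slope_def_field, h0, sub_zero, sub_zero] at hr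
    have hq : deriv g r / r < 0 := lt_of_lt_of_le hr (by linarith)
    exact (div_neg_iff.mp hq).resolve_left (fun h => absurd hrpos (not_lt.mpr h.2.le)) |>.1
  rw [eventually_nhdsWithin_iff] at hev'
  rcases Metric.eventually_nhds_iff.mp hev' with ⟨b, hb, hball⟩
  have hm' : ∀ᶠ y in nhds (0:ℝ), g 0 ≤ g y := hm
  rcases Metric.eventually_nhds_iff.mp hm' with ⟨b', hb', hball'⟩
  set c := min b b' / 2 with hc
  have hcpos : 0 < c := by positivity
  have hcb : c < b := by have := min_le_left b b'; rw [hc]; linarith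
  have hcb' : c < b' := by have := min_le_right b b'; rw [hc]; linarith
  have hanti : StrictAntiOn g (Icc 0 c) := by
    apply strictAntiOn_of_deriv_neg (convex_Icc 0 c) (hg1.continuous.continuousOn)
    intro r hr
    rw [interior_Icc] at hr
    apply hball (show dist r 0 < b by
      rw [Real.dist_eq, sub_zero, abs_of_pos hr.1]; linarith [hr.2]) hr.1
  have h1 : g c < g 0 := hanti (left_mem_Icc.mpr hcpos.le) (right_mem_Icc.mpr hcpos.le) hcpos
  have h2 : g 0 ≤ g c := by
    apply hball'; rw [Real.dist_eq, sub_zero, abs_of_pos hcpos]; linarith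
  linarith

lemma lap_nonneg_of_localmin {ψ : E → ℝ} (hψ : ContDiff ℝ 2 ψ) {x : E}
    (hm : IsLocalMin ψ x) : 0 ≤ laplacian ψ x := by
  unfold laplacian
  apply Finset.sum_nonneg
  intro i _
  set v : E := EuclideanSpace.single i (1:ℝ) with hv
  set c : ℝ → E := fun r => x + r • v with hcdef
  have hcC : ContDiff ℝ 2 c := contDiff_const.add (contDiff_id.smul contDiff_const)
  have hc0 : c 0 = x := by simp [hcdef]
  set g : ℝ → ℝ := fun r => ψ (c r) with hgdef
  have hgC : ContDiff ℝ 2 g := hψ.comp hcC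
  have hgm : IsLocalMin g 0 := by
    have hmx : IsLocalMin ψ (c 0) := hc0 ▸ hm
    exact hmx.comp_continuous hcC.continuous.continuousAt
  -- identify deriv (deriv g) 0 with the laplacian term
  have hF : ContDiff ℝ 1 (fun y : E => fderiv ℝ ψ y v) :=
    (hψ.fderiv_right (by norm_num)).clm_apply contDiff_const
  have hcr : ∀ r : ℝ, HasDerivAt c v r := by
    intro r
    exact (((hasDerivAt_id r).smul_const v).const_add x).congr_deriv (one_smul ℝ v)
  have hderiv_g : deriv g = fun r => fderiv ℝ ψ (c r) v := by
    funext r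
    exact (((hψ.differentiable (by norm_num)) (c r)).hasFDerivAt.comp_hasDerivAt r (hcr r)).deriv
  have hderiv2 : HasDerivAt (deriv g) (fderiv ℝ (fun y : E => fderiv ℝ ψ y v) x v) 0 := by
    rw [hderiv_g]
    have h := ((hF.differentiable one_ne_zero) (c 0)).hasFDerivAt.comp_hasDerivAt 0 (hcr 0)
    rw [hc0] at h
    exact h
  have := deriv2_nonneg_1d hgC hgm
  rwa [hderiv2.deriv] at this





lemma max_principle {N : ℕ} (L C T : ℝ) (hL : 0 ≤ L) (hT : 0 < T)
    (w : ℝ → EuclideanSpace ℝ (Fin N) → ℝ) (U Ωc : Set (EuclideanSpace ℝ (Fin N)))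
    (hUopen : IsOpen U) (hΩclosed : IsClosed Ωc) (hUΩ : U ⊆ Ωc)
    (hcont : ContinuousOn (Function.uncurry w) (Icc 0 T ×ˢ Ωc))
    (hbd : ∀ s ∈ Icc 0 T, ∀ x ∈ Ωc, -C ≤ w s x)
    (h0 : ∀ x ∈ Ωc, 0 ≤ w 0 x)
    (hbdry : ∀ s ∈ Icc 0 T, ∀ x ∈ Ωc, x ∉ U → 0 ≤ w s x)
    (htd : ∀ x ∈ U, ∀ s ∈ Ioc 0 T, DifferentiableAt ℝ (fun τ => w τ x) s)
    (hC2 : ∀ s ∈ Ioc 0 T, ContDiff ℝ 2 (w s))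
    (hpde : ∀ s ∈ Ioc 0 T, ∀ x ∈ U, laplacian (w s) x - L * |w s x| ≤ deriv (fun τ => w τ x) s) :
    ∀ s ∈ Icc 0 T, ∀ x ∈ Ωc, 0 ≤ w s x := by
  intro s hs x hx
  set α : ℝ := L + 2 * N + 1 with hα
  have hαpos : 0 < α := by
    have hN : (0:ℝ) ≤ (N:ℝ) := Nat.cast_nonneg N
    rw [hα]; linarith
  -- It suffices to prove the perturbed strict positivity for all ε > 0
  suffices key : ∀ ε > 0, 0 < w s x + ε * Real.exp (α * s) * Q x by
    by_contra hneg
    push_neg at hneg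
    set M : ℝ := Real.exp (α * s) * Q x with hM
    have hMpos : 0 < M := by
      have := Q_ge_one x
      have := Real.exp_pos (α * s)
      nlinarith
    have hh := key (-(w s x) / (2 * M)) (div_pos (by linarith) (by linarith))
    rw [hM] at hh
    have : -(w s x) / (2 * M) * (Real.exp (α * s) * Q x) = -(w s x) / 2 := by
      field_simp [hM]
      ring
    nlinarith [hh, this]
  intro ε hε
  by_contra hcontra
  push_neg at hcontra
  -- the perturbed function and its nonpositivity set
  set h : ℝ × EuclideanSpace ℝ (Fin N) → ℝ :=
    fun p => w p.1 p.2 + ε * Real.exp (α * p.1) * Q p.2 with hh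
  have hQcont : Continuous (Q (N := N)) := Q_contDiff.continuous
  have hcont' : ContinuousOn h (Icc 0 T ×ˢ Ωc) := by
    apply hcont.add
    exact ((continuous_const.mul (Real.continuous_exp.comp
      (continuous_const.mul continuous_fst))).mul (hQcont.comp continuous_snd)).continuousOn
  set S : Set (ℝ × EuclideanSpace ℝ (Fin N)) := (Icc 0 T ×ˢ Ωc) ∩ h ⁻¹' (Iic 0) with hS
  have hSne : S.Nonempty := ⟨(s, x), ⟨hs, hx⟩, by simpa [hh] using hcontra⟩
  have hSclosed : IsClosed S :=
    hcont'.preimage_isClosed_of_isClosed (isClosed_Icc.prod hΩclosed) isClosed_Iic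
  have hSsub : S ⊆ Icc 0 T ×ˢ closedBall 0 (Real.sqrt (C / ε)) := by
    rintro ⟨τ, y⟩ ⟨⟨hτ, hy⟩, hle⟩
    refine ⟨hτ, ?_⟩
    have hQy : Q y ≤ C / ε := by
      have h1 : 1 ≤ Real.exp (α * τ) := by
        rw [Real.one_le_exp_iff]
        exact mul_nonneg hαpos.le hτ.1
      have h2 : -C ≤ w τ y := hbd τ hτ y hy
      have h3 : h (τ, y) ≤ 0 := hle
      have hQ1 := Q_ge_one y
      simp only [hh] at h3
      rw [le_div_iff₀ hε]
      have hQ0 : (0:ℝ) ≤ Q y := by linarith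
      have e1 : ε * Q y * 1 ≤ ε * Q y * Real.exp (α * τ) :=
        mul_le_mul_of_nonneg_left h1 (by positivity)
      nlinarith
    have hy2 : ‖y‖ ^ 2 ≤ C / ε := by
      have := Q_eq_one_add_norm_sq y
      nlinarith [Q_ge_one y]
    rw [mem_closedBall, dist_zero_right]
    calc ‖y‖ = Real.sqrt (‖y‖ ^ 2) := by rw [Real.sqrt_sq (norm_nonneg y)]
      _ ≤ Real.sqrt (C / ε) := Real.sqrt_le_sqrt hy2
  have hScompact : IsCompact S :=
    isCompact_of_isClosed_isBounded hSclosed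
      ((Metric.isBounded_Icc 0 T).prod Metric.isBounded_closedBall |>.subset hSsub)
  obtain ⟨⟨t₁, x₁⟩, hmem, hminOn⟩ :=
    hScompact.exists_isMinOn hSne continuous_fst.continuousOn
  have hmin : ∀ p ∈ S, t₁ ≤ p.1 := fun p hp => hminOn hp
  have ht₁Icc : t₁ ∈ Icc 0 T := hmem.1.1
  have hx₁Ω : x₁ ∈ Ωc := hmem.1.2
  have hneg₁ : h (t₁, x₁) ≤ 0 := hmem.2
  have ht₁pos : 0 < t₁ := by
    rcases lt_or_eq_of_le ht₁Icc.1 with h' | h'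
    · exact h'
    · exfalso
      have := h0 x₁ hx₁Ω
      have hQ1 := Q_ge_one x₁
      have hexp : 0 < Real.exp (α * t₁) := Real.exp_pos _
      simp only [hh, ← h'] at hneg₁ this
      nlinarith [mul_pos (mul_pos hε (Real.exp_pos (α * 0))) (lt_of_lt_of_le zero_lt_one hQ1)]
  have hbefore : ∀ τ ∈ Icc 0 T, τ < t₁ → ∀ y ∈ Ωc, 0 < h (τ, y) := by
    intro τ hτ hτlt y hy
    by_contra hc
    push_neg at hc
    exact absurd (hmin (τ, y) ⟨⟨hτ, hy⟩, hc⟩) (not_le.mpr hτlt)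
  have hge : ∀ y ∈ Ωc, 0 ≤ h (t₁, y) := by
    intro y hy
    have hcy : ContinuousWithinAt (fun τ => h (τ, y)) (Icc 0 T) t₁ := by
      have h1 : ContinuousWithinAt h (Icc 0 T ×ˢ Ωc) (t₁, y) := hcont' _ ⟨ht₁Icc, hy⟩
      have hmap : MapsTo (fun τ : ℝ => (τ, y)) (Icc 0 T) (Icc 0 T ×ˢ Ωc) :=
        fun τ hτ => ⟨hτ, hy⟩
      have h2 : ContinuousWithinAt (fun τ : ℝ => (τ, y)) (Icc 0 T) t₁ :=
        (continuous_id.prodMk continuous_const).continuousWithinAt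
      exact ContinuousWithinAt.comp (g := h) (f := fun τ : ℝ => (τ, y)) (s := Icc 0 T)
        (t := Icc 0 T ×ˢ Ωc) (x := t₁) h1 h2 hmap
    have hsub : Ico 0 t₁ ⊆ Icc 0 T := fun τ hτ => ⟨hτ.1, hτ.2.le.trans ht₁Icc.2⟩
    have hNB : (nhdsWithin t₁ (Ico 0 t₁)).NeBot := by
      rw [← mem_closure_iff_nhdsWithin_neBot, closure_Ico (ne_of_lt ht₁pos), right_mem_Icc]
      exact ht₁pos.le
    have htend : Filter.Tendsto (fun τ => h (τ, y)) (nhdsWithin t₁ (Ico 0 t₁)) (nhds (h (t₁, y))) :=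
      (hcy.mono hsub).tendsto
    exact ge_of_tendsto htend (Filter.eventually_of_mem self_mem_nhdsWithin
      (fun τ hτ => (hbefore τ (hsub hτ) hτ.2 y hy).le))
  have hzero : h (t₁, x₁) = 0 := le_antisymm hneg₁ (hge x₁ hx₁Ω)
  set c : ℝ := ε * Real.exp (α * t₁) with hc
  have hcpos : 0 < c := by positivity
  have hQ₁ := Q_ge_one x₁
  have hx₁U : x₁ ∈ U := by
    by_contra hnU
    have := hbdry t₁ ht₁Icc x₁ hx₁Ω hnU
    simp only [hh] at hzero
    nlinarith [mul_pos (mul_pos hε (Real.exp_pos (α * t₁))) (lt_of_lt_of_le zero_lt_one hQ₁)]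
  have ht₁Ioc : t₁ ∈ Ioc 0 T := ⟨ht₁pos, ht₁Icc.2⟩
  -- spatial minimum
  have hmloc : IsLocalMin (fun y => h (t₁, y)) x₁ := by
    filter_upwards [hUopen.mem_nhds hx₁U] with y hy
    rw [hzero]
    exact hge y (hUΩ hy)
  have hwC2 : ContDiff ℝ 2 (w t₁) := hC2 t₁ ht₁Ioc
  have hhC2 : ContDiff ℝ 2 (fun y => h (t₁, y)) := by
    have : (fun y => h (t₁, y)) = fun y => w t₁ y + c * Q y := by
      funext y; simp only [hh, hc]
    rw [this]
    exact hwC2.add (contDiff_const.mul Q_contDiff)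
  have hlap_ge : 0 ≤ laplacian (fun y => h (t₁, y)) x₁ := lap_nonneg_of_localmin hhC2 hmloc
  have hlap_eq : laplacian (fun y => h (t₁, y)) x₁
      = laplacian (w t₁) x₁ + c * (2 * N) := by
    have heq : (fun y => h (t₁, y)) = fun y => w t₁ y + (fun z => c * Q z) y := by
      funext y; simp only [hh, hc]
    rw [heq, lap_add hwC2 (contDiff_const.mul Q_contDiff), lap_const_mul Q_contDiff, lap_Q]
  -- time derivative
  have hdw : DifferentiableAt ℝ (fun τ => w τ x₁) t₁ := htd x₁ hx₁U t₁ ht₁Ioc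
  have hexp : HasDerivAt (fun τ => ε * Real.exp (α * τ) * Q x₁)
      (ε * (Real.exp (α * t₁) * α) * Q x₁) t₁ := by
    have h1 : HasDerivAt (fun τ => α * τ) α t₁ := by
      simpa using (hasDerivAt_id t₁).const_mul α
    have h2 : HasDerivAt (fun τ => Real.exp (α * τ)) (Real.exp (α * t₁) * α) t₁ :=
      (Real.hasDerivAt_exp (α * t₁)).comp t₁ h1
    exact (h2.const_mul ε).mul_const (Q x₁)
  have hφd : HasDerivAt (fun τ => h (τ, x₁))
      (deriv (fun τ => w τ x₁) t₁ + ε * (Real.exp (α * t₁) * α) * Q x₁) t₁ :=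
    hdw.hasDerivAt.add hexp
  have hφle : deriv (fun τ => w τ x₁) t₁ + ε * (Real.exp (α * t₁) * α) * Q x₁ ≤ 0 := by
    have hslope := hasDerivAt_iff_tendsto_slope.mp hφd
    have hNB : (nhdsWithin t₁ (Ico 0 t₁)).NeBot := by
      rw [← mem_closure_iff_nhdsWithin_neBot, closure_Ico (ne_of_lt ht₁pos), right_mem_Icc]
      exact ht₁pos.le
    have hsub : nhdsWithin t₁ (Ico 0 t₁) ≤ nhdsWithin t₁ {t₁}ᶜ :=
      nhdsWithin_mono t₁ (fun τ hτ => ne_of_lt hτ.2)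
    refine le_of_tendsto (hslope.mono_left hsub) ?_
    refine Filter.eventually_of_mem self_mem_nhdsWithin (fun τ hτ => ?_)
    have hτT : τ ∈ Icc 0 T := ⟨hτ.1, hτ.2.le.trans ht₁Icc.2⟩
    have hpos := hbefore τ hτT hτ.2 x₁ hx₁Ω
    have : slope (fun τ => h (τ, x₁)) t₁ τ = h (τ, x₁) / (τ - t₁) := by
      rw [slope_def_field, hzero, sub_zero]
    rw [this]
    exact div_nonpos_of_nonneg_of_nonpos hpos.le (by linarith [hτ.2])
  -- final contradiction
  have hQn : (0:ℝ) ≤ (N:ℝ) := Nat.cast_nonneg N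
  have hwabs : |w t₁ x₁| = c * Q x₁ := by
    have hw : w t₁ x₁ = -(c * Q x₁) := by
      simp only [hh, ← hc] at hzero; linarith
    rw [hw, abs_neg, abs_of_nonneg (mul_nonneg hcpos.le (by linarith))]
  have hpde₁ := hpde t₁ ht₁Ioc x₁ hx₁U
  have key1 : deriv (fun τ => w τ x₁) t₁ + c * α * Q x₁ ≤ 0 := by
    have he : ε * (Real.exp (α * t₁) * α) * Q x₁ = c * α * Q x₁ := by rw [hc]; ring
    linarith [hφle, he.ge, he.le]
  have key2 : -(c * (2 * N)) - L * (c * Q x₁) ≤ deriv (fun τ => w τ x₁) t₁ := by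
    have h1 : laplacian (w t₁) x₁ = laplacian (fun y => h (t₁, y)) x₁ - c * (2 * N) := by
      linarith [hlap_eq]
    have h2 : L * |w t₁ x₁| = L * (c * Q x₁) := by rw [hwabs]
    linarith [hpde₁, hlap_ge]
  have e3 : c * α * Q x₁ = c * (2 * N) * Q x₁ + c * Q x₁ + L * (c * Q x₁) := by
    rw [hα]; ring
  have e4 : c * (2 * N) * Q x₁ ≥ c * (2 * N) := by
    nlinarith [mul_nonneg (mul_nonneg hcpos.le (by positivity : (0:ℝ) ≤ 2 * (N:ℝ)))
      (sub_nonneg.mpr hQ₁)]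
  have e5 : c * Q x₁ ≥ c := by nlinarith [mul_nonneg hcpos.le (sub_nonneg.mpr hQ₁)]
  linarith





section Refl
variable {N : ℕ}

lemma sigma_apply (e : EuclideanSpace ℝ (Fin N)) (d : ℝ) (z : EuclideanSpace ℝ (Fin N)) :
    reflCLM e z + (2*d) • e = z - (2*(⟪e, z⟫ - d)) • e := by
  rw [reflCLM_apply]
  module

lemma inner_sigma (e : EuclideanSpace ℝ (Fin N)) (he : ‖e‖ = 1) (d : ℝ)
    (z : EuclideanSpace ℝ (Fin N)) :
    ⟪e, reflCLM e z + (2*d) • e⟫ = 2*d - ⟪e, z⟫ := by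
  rw [reflCLM_apply]
  simp only [inner_add_right, inner_sub_right, real_inner_smul_right,
    real_inner_self_eq_norm_sq, he]
  ring

lemma sigma_fix (e : EuclideanSpace ℝ (Fin N)) (d : ℝ) (z : EuclideanSpace ℝ (Fin N))
    (hz : ⟪e, z⟫ = d) : reflCLM e z + (2*d) • e = z := by
  rw [sigma_apply, hz]
  simp

lemma refl_ineq (f : ℝ → ℝ → ℝ) (L : ℝ≥0)
    (hfL : ∀ t > (0:ℝ), LipschitzWith L (fun z => f t z))
    (δ : ℝ) (hδ : 0 < δ) (u₀ : EuclideanSpace ℝ (Fin N) → ℝ)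
    (hu₀nn : ∀ x, 0 ≤ u₀ x) (hu₀supp : tsupport u₀ ⊆ Metric.ball 0 δ)
    (u : ℝ → EuclideanSpace ℝ (Fin N) → ℝ) (hu : IsClassicalSolution f u u₀)
    (e : EuclideanSpace ℝ (Fin N)) (he : ‖e‖ = 1) (d : ℝ) (hd : δ ≤ d)
    (t : ℝ) (ht : 0 < t) (x : EuclideanSpace ℝ (Fin N)) (hx : ⟪e, x⟫ ≤ d) :
    u t (reflCLM e x + (2*d) • e) ≤ u t x := by
  set σ : EuclideanSpace ℝ (Fin N) → EuclideanSpace ℝ (Fin N) :=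
    fun z => reflCLM e z + (2*d) • e with hσ
  have hσcont : Continuous σ := (reflCLM e).continuous.add continuous_const
  have hfix : ∀ z, ⟪e, z⟫ = d → σ z = z := fun z hz => by
    simp only [hσ]; exact sigma_fix e d z hz
  have hinσ : ∀ z, ⟪e, σ z⟫ = 2*d - ⟪e, z⟫ := fun z => by
    simp only [hσ]; exact inner_sigma e he d z
  have hσC2 : ContDiff ℝ 2 σ := (reflCLM e).contDiff.add contDiff_const
  set w : ℝ → EuclideanSpace ℝ (Fin N) → ℝ := fun s z => u s z - u s (σ z) with hw
  set U : Set (EuclideanSpace ℝ (Fin N)) := {z | ⟪e, z⟫ < d} with hU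
  set Ωc : Set (EuclideanSpace ℝ (Fin N)) := {z | ⟪e, z⟫ ≤ d} with hΩ
  have hecont : Continuous fun z : EuclideanSpace ℝ (Fin N) => ⟪e, z⟫ :=
    (innerSL ℝ e).continuous
  have hUopen : IsOpen U := isOpen_lt hecont continuous_const
  have hΩclosed : IsClosed Ωc := isClosed_le hecont continuous_const
  have hUΩ : U ⊆ Ωc := by
    intro z hz
    simp only [hU, hΩ, mem_setOf_eq] at *
    exact le_of_lt hz
  obtain ⟨C, hC⟩ := hu.bounded t ht
  -- apply the maximum principle
  have key := max_principle (L : ℝ) (2*C) t L.coe_nonneg ht w U Ωc hUopen hΩclosed hUΩ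
    ?_ ?_ ?_ ?_ ?_ ?_ ?_ t (right_mem_Icc.mpr ht.le) x hx
  · rw [hw] at key
    simp only [hσ] at key
    linarith [key]
  -- continuity
  · have hmap : MapsTo (fun p : ℝ × EuclideanSpace ℝ (Fin N) => (p.1, σ p.2))
        (Icc 0 t ×ˢ Ωc) (Ici 0 ×ˢ (univ : Set (EuclideanSpace ℝ (Fin N)))) :=
      fun p hp => ⟨hp.1.1, trivial⟩
    have hsub : (Icc 0 t ×ˢ Ωc : Set (ℝ × EuclideanSpace ℝ (Fin N)))
        ⊆ Ici 0 ×ˢ univ := fun p hp => ⟨hp.1.1, trivial⟩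
    have h2 : ContinuousOn (fun p : ℝ × EuclideanSpace ℝ (Fin N) => u p.1 (σ p.2))
        (Icc 0 t ×ˢ Ωc) := by
      have := hu.cont.comp ((continuous_fst.prodMk (hσcont.comp continuous_snd)).continuousOn
        (s := (Icc 0 t ×ˢ Ωc : Set (ℝ × EuclideanSpace ℝ (Fin N))))) hmap
      exact this
    exact (hu.cont.mono hsub).sub h2
  -- lower bound
  · intro s hs y _
    have h1 := abs_le.mp (hC s hs (σ y))
    have h2 := abs_le.mp (hC s hs y)
    simp only [hw]
    linarith [h1.1, h1.2, h2.1, h2.2]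
  -- initial condition
  · intro y hy
    have h0 : w 0 y = u₀ y - u₀ (σ y) := by rw [hw]; simp [hu.init]
    have hy' : ⟪e, y⟫ ≤ d := hy
    rcases eq_or_lt_of_le hy' with heq | hlt
    · rw [h0, hfix y heq]; simp
    · have hin : ⟪e, σ y⟫ = 2*d - ⟪e, y⟫ := hinσ y
      have hgt : δ < ⟪e, σ y⟫ := by rw [hin]; linarith
      have hnorm : ⟪e, σ y⟫ ≤ ‖σ y‖ := by
        calc ⟪e, σ y⟫ ≤ ‖e‖ * ‖σ y‖ := real_inner_le_norm e (σ y)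
          _ = ‖σ y‖ := by rw [he, one_mul]
      have hnb : σ y ∉ Metric.ball (0 : EuclideanSpace ℝ (Fin N)) δ := by
        rw [mem_ball, dist_zero_right]
        push_neg
        linarith
      have hz : u₀ (σ y) = 0 :=
        image_eq_zero_of_notMem_tsupport (fun hmem => hnb (hu₀supp hmem))
      rw [h0, hz, sub_zero]
      exact hu₀nn y
  -- boundary
  · intro s _ y hy hyU
    have heq : ⟪e, y⟫ = d := le_antisymm hy (not_lt.mp hyU)
    rw [hw]
    simp [hfix y heq]
  -- time differentiability
  · intro y _ s hs
    exact (hu.time_diff y s hs.1).sub (hu.time_diff (σ y) s hs.1)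
  -- space regularity
  · intro s hs
    exact (hu.space_smooth s hs.1).sub ((hu.space_smooth s hs.1).comp hσC2)
  -- differential inequality
  · intro s hs y _
    have hds : deriv (fun τ => w τ y) s
        = deriv (fun τ => u τ y) s - deriv (fun τ => u τ (σ y)) s := by
      rw [hw]
      exact deriv_sub (hu.time_diff y s hs.1) (hu.time_diff (σ y) s hs.1)
    have hlapw : laplacian (w s) y = laplacian (u s) y - laplacian (u s) (σ y) := by
      have h1 : laplacian (w s) y
          = laplacian (u s) y - laplacian (fun z => u s (σ z)) y :=
        lap_sub (hu.space_smooth s hs.1) ((hu.space_smooth s hs.1).comp hσC2) y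
      have h2 : laplacian (fun z => u s (σ z)) y = laplacian (u s) (σ y) := by
        simp only [hσ]
        exact lap_comp_refl (hu.space_smooth s hs.1) e he ((2*d) • e) y
      rw [h1, h2]
    have heq1 := hu.eqn s hs.1 y
    have heq2 := hu.eqn s hs.1 (σ y)
    have hlip : |f s (u s y) - f s (u s (σ y))| ≤ (L : ℝ) * |w s y| := by
      have h3 := (hfL s hs.1).dist_le_mul (u s y) (u s (σ y))
      rw [Real.dist_eq, Real.dist_eq] at h3
      simpa [hw] using h3
    have habs := abs_le.mp hlip
    rw [hds, heq1, heq2, hlapw]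
    linarith [habs.1]

end Refl



lemma jones {N : ℕ} (f : ℝ → ℝ → ℝ) (L : ℝ≥0)
    (hfL : ∀ t > (0:ℝ), LipschitzWith L (fun z => f t z))
    (δ : ℝ) (hδ : 0 < δ) (u₀ : EuclideanSpace ℝ (Fin N) → ℝ)
    (hu₀nn : ∀ x, 0 ≤ u₀ x) (hu₀supp : tsupport u₀ ⊆ Metric.ball 0 δ)
    (u : ℝ → EuclideanSpace ℝ (Fin N) → ℝ) (hu : IsClassicalSolution f u u₀)
    (t : ℝ) (ht : 0 < t) (x y : EuclideanSpace ℝ (Fin N))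
    (hxy : ‖y‖ + 2*δ ≤ ‖x‖) : u t x ≤ u t y := by
  have hyx : ‖y‖ < ‖x‖ := by linarith
  have hne : x ≠ y := by
    intro h; rw [h] at hyx; exact lt_irrefl _ hyx
  have hnpos : 0 < ‖x - y‖ := by
    rw [norm_pos_iff]; exact sub_ne_zero.mpr hne
  set n : ℝ := ‖x - y‖ with hn
  set e : EuclideanSpace ℝ (Fin N) := n⁻¹ • (x - y) with he'
  have he : ‖e‖ = 1 := by
    rw [he', norm_smul, norm_inv, Real.norm_eq_abs, abs_of_pos hnpos, ← hn,
      inv_mul_cancel₀ hnpos.ne']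
  set d : ℝ := (‖x‖^2 - ‖y‖^2) / (2*n) with hd'
  have hxy2 : ‖x - y‖ ≤ ‖x‖ + ‖y‖ := norm_sub_le x y
  have hnsq : n^2 = ‖x‖^2 - 2*⟪x, y⟫ + ‖y‖^2 := by
    rw [hn]; exact norm_sub_sq_real x y
  have hd : δ ≤ d := by
    rw [hd', le_div_iff₀ (by linarith)]
    nlinarith [norm_nonneg y, norm_nonneg x]
  have hiey : ⟪e, y⟫ = n⁻¹ * (⟪x, y⟫ - ‖y‖^2) := by
    rw [he', real_inner_smul_left, inner_sub_left, real_inner_self_eq_norm_sq]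
  have hxd : ⟪e, y⟫ ≤ d := by
    rw [hiey, hd']
    rw [div_eq_mul_inv, show (2*n)⁻¹ = 2⁻¹ * n⁻¹ by rw [mul_inv]]
    have h2 : 0 ≤ n⁻¹ := by positivity
    nlinarith [sq_nonneg n, hnsq]
  have hscal : 2*(⟪e, y⟫ - d) = -n := by
    have hIexp : 2*(⟪x, y⟫ - ‖y‖^2) - (‖x‖^2 - ‖y‖^2) = -(n^2) := by linarith [hnsq]
    rw [hiey, hd', div_eq_mul_inv, show (2*n)⁻¹ = 2⁻¹ * n⁻¹ by rw [mul_inv]]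
    have hre : (2:ℝ) * (n⁻¹ * (⟪x, y⟫ - ‖y‖^2) - (‖x‖^2 - ‖y‖^2) * (2⁻¹ * n⁻¹))
        = n⁻¹ * (2*(⟪x, y⟫ - ‖y‖^2) - (‖x‖^2 - ‖y‖^2)) := by ring
    rw [hre, hIexp, show n⁻¹ * -(n^2) = -(n⁻¹ * n * n) by ring,
      inv_mul_cancel₀ hnpos.ne', one_mul]
  have hσy : reflCLM e y + (2*d) • e = x := by
    rw [sigma_apply, hscal]
    have h1 : n • (n⁻¹ • (x - y)) = x - y := by
      rw [smul_smul, mul_inv_cancel₀ hnpos.ne', one_smul]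
    rw [neg_smul, sub_neg_eq_add, he', h1]
    abel
  have := refl_ineq f L hfL δ hδ u₀ hu₀nn hu₀supp u hu e he d hd t ht y hxd
  rwa [hσy] at this


end AuxPDE

/-- For an invading solution with initial datum supported in `B_δ`, for each
`θ ∈ (0,Z)` one has `0 ≤ ℛᵉ_θ(t) − ℛⁱ_θ(t) ≤ δπ` for all large times. -/
theorem outerRadius_sub_innerRadius_le
    {N : ℕ} (hN : 0 < N) (f : ℝ → ℝ → ℝ) (hf : StandingAssumptions f)
    (δ : ℝ) (hδ : 0 < δ)
    (u₀ : EuclideanSpace ℝ (Fin N) → ℝ)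
    (hu₀nn : ∀ x, 0 ≤ u₀ x) (hu₀cont : Continuous u₀) (hu₀ne : u₀ ≠ 0)
    (hu₀supp : tsupport u₀ ⊆ Metric.ball 0 δ)
    (u : ℝ → EuclideanSpace ℝ (Fin N) → ℝ) (hu : IsClassicalSolution f u u₀)
    (Z : ℝ≥0∞) (hZ : 0 < Z) (hinv : Invades u Z)
    (θ : ℝ) (hθ : 0 < θ) (hθZ : ENNReal.ofReal θ < Z) :
    ∃ t₀ > (0:ℝ), ∀ t ≥ t₀,
      0 ≤ outerRadius u θ t - innerRadius u θ t ∧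
      outerRadius u θ t - innerRadius u θ t ≤ δ * Real.pi := by
  classical
  obtain ⟨Lips, hLips⟩ := hf.2.1
  -- pick an intermediate level z with θ < z and ofReal z < Z
  obtain ⟨z, hz0, hθz, hzZ⟩ := ENNReal.lt_iff_exists_real_btwn.mp hθZ
  have hzpos : 0 < z := by
    rcases lt_or_eq_of_le hz0 with h | h
    · exact h
    · exfalso
      rw [← h, ENNReal.ofReal_zero] at hθz
      exact ENNReal.not_lt_zero hθz
  have hθltz : θ < z := (ENNReal.ofReal_lt_ofReal_iff hzpos).mp hθz
  obtain ⟨t₁, ht₁⟩ := hinv z hzZ {0} isCompact_singleton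
  refine ⟨max t₁ 1, lt_of_lt_of_le zero_lt_one (le_max_right _ _), ?_⟩
  intro t htt
  have ht0 : (0:ℝ) < t := lt_of_lt_of_le zero_lt_one ((le_max_right t₁ 1).trans htt)
  have hu0 : θ < u t 0 :=
    lt_of_lt_of_le hθltz (ht₁ t ((le_max_left t₁ 1).trans htt) 0 rfl)
  have hJ : ∀ x y : EuclideanSpace ℝ (Fin N), ‖y‖ + 2*δ ≤ ‖x‖ → u t x ≤ u t y :=
    fun x y h => AuxPDE.jones f Lips hLips δ hδ u₀ hu₀nn hu₀supp u hu t ht0 x y h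
  -- the distinguished unit vector
  set v : EuclideanSpace ℝ (Fin N) := EuclideanSpace.single (⟨0, hN⟩ : Fin N) (1:ℝ) with hv
  have hvnorm : ‖v‖ = 1 := by rw [hv, EuclideanSpace.norm_single, norm_one]
  set Si : Set ℝ := {r : ℝ | ∃ x₀, ∀ x ∈ Metric.ball x₀ r, θ < u t x} with hSi
  set Se : Set ℝ := {r : ℝ | 0 < r ∧ ∃ x₀, ∀ x ∉ Metric.ball x₀ r, u t x ≤ θ} with hSe
  have hIR : innerRadius u θ t = sSup Si := rfl
  have hOR : outerRadius u θ t = sInf Se := rfl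
  have hSi0 : (0:ℝ) ∈ Si := ⟨0, fun x hx => absurd hx (by simp)⟩
  have hSeBdd : BddBelow Se := ⟨0, fun r hr => hr.1.le⟩
  set Rset : Set ℝ := (fun x : EuclideanSpace ℝ (Fin N) => ‖x‖) '' {x | θ < u t x} with hRset
  have hRne : Rset.Nonempty := ⟨‖(0:EuclideanSpace ℝ (Fin N))‖, 0, hu0, rfl⟩
  rw [hIR, hOR]
  by_cases hB : BddAbove Rset
  · -- bounded case
    set ρ : ℝ := sSup Rset with hρ
    have hρub : ∀ x : EuclideanSpace ℝ (Fin N), θ < u t x → ‖x‖ ≤ ρ :=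
      fun x hx => le_csSup hB ⟨x, hx, rfl⟩
    have hρ0 : 0 ≤ ρ := by
      have := hρub 0 hu0
      simpa using this
    -- Si is bounded above by ρ
    have hSiBdd : ∀ r ∈ Si, r ≤ ρ := by
      rintro r ⟨x₀, hx₀⟩
      rcases le_or_gt r 0 with h | h
      · linarith
      · by_contra hc
        push_neg at hc
        set r' : ℝ := (ρ + r)/2 with hr'
        have hr'1 : ρ < r' := by rw [hr']; linarith
        have hr'2 : r' < r := by rw [hr']; linarith
        have hr'pos : 0 < r' := by linarith
        by_cases hx0 : x₀ = (0:EuclideanSpace ℝ (Fin N))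
        · have hmem : r' • v ∈ Metric.ball x₀ r := by
            rw [hx0, mem_ball, dist_zero_right, norm_smul, hvnorm, Real.norm_eq_abs,
              abs_of_pos hr'pos]
            linarith
          have := hρub _ (hx₀ _ hmem)
          rw [norm_smul, hvnorm, Real.norm_eq_abs, abs_of_pos hr'pos] at this
          linarith
        · have hx₀pos : 0 < ‖x₀‖ := norm_pos_iff.mpr hx0
          set p : EuclideanSpace ℝ (Fin N) := (1 + r'/‖x₀‖) • x₀ with hp
          have hpsub : p - x₀ = (r'/‖x₀‖) • x₀ := by
            rw [hp]; module
          have hdist : dist p x₀ = r' := by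
            rw [dist_eq_norm, hpsub, norm_smul, Real.norm_eq_abs,
              abs_of_pos (by positivity : (0:ℝ) < r'/‖x₀‖), div_mul_cancel₀ _ hx₀pos.ne']
          have hmem : p ∈ Metric.ball x₀ r := by rw [mem_ball, hdist]; linarith
          have hnp : ‖p‖ = ‖x₀‖ + r' := by
            rw [hp, norm_smul, Real.norm_eq_abs,
              abs_of_pos (by positivity : (0:ℝ) < 1 + r'/‖x₀‖)]
            field_simp
          have := hρub _ (hx₀ _ hmem)
          rw [hnp] at this
          linarith
    have hSiBddAbove : BddAbove Si := ⟨ρ, fun r hr => hSiBdd r hr⟩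
    -- ρ - 2δ belongs to Si (centered ball)
    have hmem1 : (ρ - 2*δ) ∈ Si := by
      refine ⟨0, fun yy hyy => ?_⟩
      rw [mem_ball, dist_zero_right] at hyy
      obtain ⟨rr, hrrmem, hrrgt⟩ := exists_lt_of_lt_csSup hRne
        (show ‖yy‖ + 2*δ < ρ by linarith)
      obtain ⟨xx, hxx, rfl⟩ := hrrmem
      exact lt_of_lt_of_le hxx (hJ xx yy (le_of_lt hrrgt))
    -- ρ + ε belongs to Se
    have hmem2 : ∀ ε > (0:ℝ), (ρ + ε) ∈ Se := by
      intro ε hε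
      refine ⟨by linarith, 0, fun x hx => ?_⟩
      rw [mem_ball, dist_zero_right, not_lt] at hx
      by_contra hc
      push_neg at hc
      have := hρub x hc
      linarith
    have hSene : Se.Nonempty := ⟨ρ + 1, hmem2 1 one_pos⟩
    -- inner radius ≤ any element of Se
    have hrR : ∀ r ∈ Si, ∀ R ∈ Se, r ≤ R := by
      rintro r ⟨x₁, hx₁⟩ R ⟨hRpos, x₀, hx₀⟩
      rcases le_or_gt r 0 with h | h
      · linarith
      · by_contra hc
        push_neg at hc
        set r' : ℝ := (R + r)/2 with hr'
        have hr'1 : R < r' := by rw [hr']; linarith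
        have hr'2 : r' < r := by rw [hr']; linarith
        have hr'pos : 0 < r' := by linarith
        set pp : EuclideanSpace ℝ (Fin N) := x₁ + r' • v with hpp
        set pm : EuclideanSpace ℝ (Fin N) := x₁ - r' • v with hpm
        have hnv : ‖r' • v‖ = r' := by
          rw [norm_smul, hvnorm, Real.norm_eq_abs, abs_of_pos hr'pos, mul_one]
        have hppb : pp ∈ Metric.ball x₁ r := by
          rw [hpp, mem_ball, dist_eq_norm, add_sub_cancel_left, hnv]; linarith
        have hpmb : pm ∈ Metric.ball x₁ r := by
          rw [hpm, mem_ball, dist_eq_norm, sub_sub_cancel_left, norm_neg, hnv]; linarith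
        have hppin : pp ∈ Metric.ball x₀ R := by
          by_contra hcc
          exact absurd (hx₀ _ hcc) (not_le.mpr (hx₁ _ hppb))
        have hpmin : pm ∈ Metric.ball x₀ R := by
          by_contra hcc
          exact absurd (hx₀ _ hcc) (not_le.mpr (hx₁ _ hpmb))
        have hdd : dist pp pm = 2 * r' := by
          rw [dist_eq_norm, hpp, hpm, show x₁ + r' • v - (x₁ - r' • v) = (2*r') • v by
            rw [two_mul, add_smul]; abel, norm_smul, hvnorm, Real.norm_eq_abs,
            abs_of_pos (by linarith : (0:ℝ) < 2*r'), mul_one]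
        have htri : dist pp pm ≤ dist pp x₀ + dist x₀ pm := dist_triangle pp x₀ pm
        rw [mem_ball] at hppin hpmin
        rw [dist_comm x₀ pm] at htri
        rw [hdd] at htri
        linarith [hppin, hpmin]
    have h1 : sSup Si ≤ sInf Se :=
      le_csInf hSene (fun R hR => csSup_le ⟨0, hSi0⟩ (fun r hr => hrR r hr R hR))
    have h2 : sInf Se ≤ ρ := by
      have hstep : ∀ ε > (0:ℝ), sInf Se ≤ ρ + ε := fun ε hε => csInf_le hSeBdd (hmem2 ε hε)
      exact le_of_forall_pos_le_add hstep
    have h3 : ρ - 2*δ ≤ sSup Si := le_csSup hSiBddAbove hmem1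
    refine ⟨by linarith, ?_⟩
    have hpi : δ * 2 ≤ δ * Real.pi := mul_le_mul_of_nonneg_left Real.two_le_pi hδ.le
    linarith
  · -- unbounded case: u t > θ everywhere
    have hall : ∀ y : EuclideanSpace ℝ (Fin N), θ < u t y := by
      intro y
      obtain ⟨rr, hrrmem, hrrgt⟩ := not_bddAbove_iff.mp hB (‖y‖ + 2*δ)
      obtain ⟨xx, hxx, rfl⟩ := hrrmem
      exact lt_of_lt_of_le hxx (hJ xx y (le_of_lt hrrgt))
    have hSiall : ∀ r : ℝ, r ∈ Si := fun r => ⟨0, fun x _ => hall x⟩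
    have hSiUnbdd : ¬ BddAbove Si := by
      rintro ⟨b, hb⟩
      have := hb (hSiall (b+1))
      linarith
    have hSeEmpty : Se = ∅ := by
      ext r
      simp only [hSe, mem_setOf_eq, mem_empty_iff_false, iff_false, not_and]
      rintro hrpos ⟨x₀, hx₀⟩
      have hmem : x₀ + r • v ∉ Metric.ball x₀ r := by
        rw [mem_ball, dist_eq_norm, add_sub_cancel_left, norm_smul, hvnorm,
          Real.norm_eq_abs, abs_of_pos hrpos, mul_one]
        exact lt_irrefl r
      exact absurd (hx₀ _ hmem) (not_le.mpr (hall _))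
    rw [Real.sSup_of_not_bddAbove hSiUnbdd, hSeEmpty, Real.sInf_empty]
    norm_num
    positivity
end

section
/- Let δ̃ > 0 and let φ : ℝ → ℝ be a C¹ function with φ(α) > δ̃ for all α. Define the plane curve γ(α) := φ(α)(cos α, sin α) ∈ ℝ². Assume that for every α the distance from the origin to the line through γ(α) orthogonal to the tangent vector γ'(α) (the normal line to the curve at γ(α)) is at most δ̃. Then for every α one has φ'(α)² ≤ δ̃² φ(α)² / (φ(α)² − δ̃²). -/
open Real

/-- If the normal lines to the curve `γ(α) = φ(α)(cos α, sin α)` pass at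
distance at most `δ̃` from the origin and `φ > δ̃`, then
`φ'(α)² ≤ δ̃² φ(α)² / (φ(α)² − δ̃²)`.  A point `p` lies on the normal line to `γ` at
`γ(α)` precisely when `p − γ(α)` is orthogonal to the tangent vector `γ'(α)`, so the
distance assumption is expressed by the existence of a point `p` of the normal line with
`‖p‖ ≤ δ̃`. -/
theorem sq_deriv_le_of_normal_lines_close_to_origin
    (δt : ℝ) (hδt : 0 < δt) (φ : ℝ → ℝ) (hφ : ContDiff ℝ 1 φ)
    (hφδ : ∀ α, δt < φ α)
    (γ : ℝ → EuclideanSpace ℝ (Fin 2))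
    (hγ : ∀ α, γ α = φ α • (EuclideanSpace.single (0 : Fin 2) (Real.cos α) +
      EuclideanSpace.single (1 : Fin 2) (Real.sin α)))
    (hnormal : ∀ α, ∃ p : EuclideanSpace ℝ (Fin 2),
      ‖p‖ ≤ δt ∧ (inner ℝ (p - γ α) (deriv γ α) : ℝ) = 0) :
    ∀ α, (deriv φ α) ^ 2 ≤ δt ^ 2 * (φ α) ^ 2 / ((φ α) ^ 2 - δt ^ 2) := by
  intro α
  set e0 : EuclideanSpace ℝ (Fin 2) := EuclideanSpace.single 0 1
  set e1 : EuclideanSpace ℝ (Fin 2) := EuclideanSpace.single 1 1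
  have hsingle : ∀ (i : Fin 2) (a : ℝ),
      EuclideanSpace.single i a = a • EuclideanSpace.single i (1:ℝ) := by
    intro i a; ext j; simp [EuclideanSpace.single_apply]
  have hγ' : γ = fun t => (φ t * Real.cos t) • e0 + (φ t * Real.sin t) • e1 := by
    funext t
    rw [hγ t, hsingle 0, hsingle 1, smul_add, smul_smul, smul_smul]
  have hφd : HasDerivAt φ (deriv φ α) α :=
    ((hφ.differentiable one_ne_zero) α).hasDerivAt
  have hcos : HasDerivAt Real.cos (-Real.sin α) α := Real.hasDerivAt_cos α
  have hsin : HasDerivAt Real.sin (Real.cos α) α := Real.hasDerivAt_sin α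
  have h1 : HasDerivAt (fun t => (φ t * Real.cos t) • e0)
      ((deriv φ α * Real.cos α + φ α * (-Real.sin α)) • e0) α :=
    ((hφd.mul hcos)).smul_const e0
  have h2 : HasDerivAt (fun t => (φ t * Real.sin t) • e1)
      ((deriv φ α * Real.sin α + φ α * Real.cos α) • e1) α :=
    ((hφd.mul hsin)).smul_const e1
  have hγd : HasDerivAt γ
      ((deriv φ α * Real.cos α + φ α * (-Real.sin α)) • e0 +
       (deriv φ α * Real.sin α + φ α * Real.cos α) • e1) α := by
    rw [hγ']; exact h1.add h2
  have hderiv := hγd.deriv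
  obtain ⟨p, hp, horth⟩ := hnormal α
  set g' := (deriv φ α * Real.cos α + φ α * (-Real.sin α)) • e0 +
       (deriv φ α * Real.sin α + φ α * Real.cos α) • e1 with hg'
  have hip : (inner ℝ p g' : ℝ) = inner ℝ (γ α) g' := by
    have := horth
    rw [hderiv, inner_sub_left] at this
    linarith [this]
  have hiγ : (inner ℝ (γ α) g' : ℝ) = φ α * deriv φ α := by
    rw [hγ']
    simp only [hg', e0, e1, inner_add_add_self, inner_add_left, inner_add_right,
      real_inner_smul_left, real_inner_smul_right, EuclideanSpace.inner_single_left,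
      EuclideanSpace.single_apply]
    norm_num
    linear_combination (φ α * deriv φ α) * Real.sin_sq_add_cos_sq α
  have hng : ‖g'‖^2 = (deriv φ α)^2 + (φ α)^2 := by
    rw [← real_inner_self_eq_norm_sq]
    simp only [hg', e0, e1, inner_add_add_self,
      real_inner_smul_left, real_inner_smul_right, EuclideanSpace.inner_single_left,
      EuclideanSpace.single_apply]
    norm_num
    linear_combination ((deriv φ α)^2 + (φ α)^2) * Real.sin_sq_add_cos_sq α
  have hCS : |(inner ℝ p g' : ℝ)| ≤ ‖p‖ * ‖g'‖ := abs_real_inner_le_norm p g'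
  have hkey : (φ α * deriv φ α)^2 ≤ δt^2 * ((deriv φ α)^2 + (φ α)^2) := by
    have h := hCS.trans (mul_le_mul_of_nonneg_right hp (norm_nonneg g'))
    rw [hip, hiγ] at h
    have := abs_nonneg (φ α * deriv φ α)
    nlinarith [norm_nonneg g', sq_abs (φ α * deriv φ α)]
  have hpos : 0 < (φ α)^2 - δt^2 := by nlinarith [hφδ α]
  rw [le_div_iff₀ hpos]
  nlinarith
end

section
/- Let 0 < δ̃ < δ and let φ : ℝ → ℝ be a C¹ function with φ(α)² ≥ δ² δ̃² / (δ² − δ̃²) for all α (in particular φ(α) > δ̃). Define γ(α) := φ(α)(cos α, sin α) ∈ ℝ² and assume that for every α the distance from the origin to the normal line to γ at γ(α) is at most δ̃. Then for all α, β with |α − β| ≤ π one has |φ(α) − φ(β)| ≤ πδ. -/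
open Real

/-- If `0 < δ̃ < δ`, `φ` is a positive `C¹` function with
`φ(α)² ≥ δ²δ̃²/(δ² − δ̃²)`, and the normal lines to the curve
`γ(α) = φ(α)(cos α, sin α)` pass at distance at most `δ̃` from the origin, then
`|φ(α) − φ(β)| ≤ πδ` whenever `|α − β| ≤ π`.  A point `p` lies on the normal line to `γ`
at `γ(α)` precisely when `p − γ(α)` is orthogonal to `γ'(α)`. -/
theorem abs_sub_le_pi_mul_of_normal_lines_close_to_origin
    (δt δ : ℝ) (hδt : 0 < δt) (hδ : δt < δ) (φ : ℝ → ℝ) (hφ : ContDiff ℝ 1 φ)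
    (hφpos : ∀ α, 0 < φ α)
    (hφδ : ∀ α, δ ^ 2 * δt ^ 2 / (δ ^ 2 - δt ^ 2) ≤ (φ α) ^ 2)
    (γ : ℝ → EuclideanSpace ℝ (Fin 2))
    (hγ : ∀ α, γ α = φ α • (EuclideanSpace.single (0 : Fin 2) (Real.cos α) +
      EuclideanSpace.single (1 : Fin 2) (Real.sin α)))
    (hnormal : ∀ α, ∃ p : EuclideanSpace ℝ (Fin 2),
      ‖p‖ ≤ δt ∧ (inner ℝ (p - γ α) (deriv γ α) : ℝ) = 0) :
    ∀ α β : ℝ, |α - β| ≤ Real.pi → |φ α - φ β| ≤ Real.pi * δ := by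
  have hφd : Differentiable ℝ φ := hφ.differentiable one_ne_zero
  set v0 : EuclideanSpace ℝ (Fin 2) := EuclideanSpace.single 0 1 with hv0
  set v1 : EuclideanSpace ℝ (Fin 2) := EuclideanSpace.single 1 1 with hv1
  have hγ2 : ∀ α, γ α = (φ α * Real.cos α) • v0 + (φ α * Real.sin α) • v1 := by
    intro α
    rw [hγ α]
    ext j
    fin_cases j <;>
      simp [v0, v1, EuclideanSpace.single_apply, mul_comm]
  have hv00 : (inner ℝ v0 v0 : ℝ) = 1 := by
    simp [v0, EuclideanSpace.inner_single_left, EuclideanSpace.single_apply]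
  have hv11 : (inner ℝ v1 v1 : ℝ) = 1 := by
    simp [v1, EuclideanSpace.inner_single_left, EuclideanSpace.single_apply]
  have hv01 : (inner ℝ v0 v1 : ℝ) = 0 := by
    simp [v0, v1, EuclideanSpace.inner_single_left, EuclideanSpace.single_apply]
  have hv10 : (inner ℝ v1 v0 : ℝ) = 0 := by
    simp [v0, v1, EuclideanSpace.inner_single_left, EuclideanSpace.single_apply]
  have key : ∀ α, |deriv φ α| ≤ δ := by
    intro α
    obtain ⟨p, hp, hip⟩ := hnormal α
    set A := φ α with hA
    set B := deriv φ α with hB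
    set D : EuclideanSpace ℝ (Fin 2) :=
      (B * Real.cos α - A * Real.sin α) • v0 + (B * Real.sin α + A * Real.cos α) • v1 with hD
    have hder : HasDerivAt γ D α := by
      have h0 : HasDerivAt (fun x => (φ x * Real.cos x) • v0 + (φ x * Real.sin x) • v1) D α := by
        have hc : HasDerivAt (fun x => φ x * Real.cos x) (B * Real.cos α + A * (-Real.sin α)) α :=
          (hφd α).hasDerivAt.mul (Real.hasDerivAt_cos α)
        have hs : HasDerivAt (fun x => φ x * Real.sin x) (B * Real.sin α + A * Real.cos α) α :=
          (hφd α).hasDerivAt.mul (Real.hasDerivAt_sin α)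
        have := (hc.smul_const v0).add (hs.smul_const v1)
        exact this.congr_deriv (by rw [hD, mul_neg, ← sub_eq_add_neg])
      have : γ = fun x => (φ x * Real.cos x) • v0 + (φ x * Real.sin x) • v1 := funext hγ2
      rw [this]; exact h0
    rw [hder.deriv, inner_sub_left] at hip
    have hγD : (inner ℝ (γ α) D : ℝ) = A * B := by
      rw [hγ2 α, hD]
      simp only [inner_add_left, inner_add_right, real_inner_smul_left, real_inner_smul_right,
        hv00, hv01, hv10, hv11, ← hA]
      linear_combination A * B * Real.sin_sq_add_cos_sq α
    have hpD : (inner ℝ p D : ℝ) = A * B := by linarith [hip, hγD]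
    have hDD : (inner ℝ D D : ℝ) = A ^ 2 + B ^ 2 := by
      rw [hD]
      simp only [inner_add_left, inner_add_right, real_inner_smul_left, real_inner_smul_right,
        hv00, hv01, hv10, hv11]
      linear_combination (A ^ 2 + B ^ 2) * Real.sin_sq_add_cos_sq α
    have hpp : (inner ℝ p p : ℝ) ≤ δt ^ 2 := by
      rw [real_inner_self_eq_norm_sq]
      nlinarith [norm_nonneg p]
    have hcs := real_inner_mul_inner_self_le p D
    rw [hpD, hDD] at hcs
    -- hcs : A*B * (A*B) ≤ ⟪p,p⟫ * (A²+B²)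
    have hABsq : A * B * (A * B) ≤ δt ^ 2 * (A ^ 2 + B ^ 2) := by
      have hDnn : (0:ℝ) ≤ A ^ 2 + B ^ 2 := by positivity
      exact le_trans hcs (mul_le_mul_of_nonneg_right hpp hDnn)
    clear_value D
    clear_value A B
    clear hip hγD hpD hDD hcs hder hD
    have hδδ : 0 < δ ^ 2 - δt ^ 2 := by nlinarith
    have hAge : δ ^ 2 * δt ^ 2 / (δ ^ 2 - δt ^ 2) ≤ A ^ 2 := by rw [hA]; exact hφδ α
    have hA2 : δ ^ 2 * δt ^ 2 ≤ A ^ 2 * (δ ^ 2 - δt ^ 2) := by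
      rw [div_le_iff₀ hδδ] at hAge; linarith
    have hAgt : δt ^ 2 < A ^ 2 := by
      have h1 : δt ^ 2 * (δ ^ 2 - δt ^ 2) < A ^ 2 * (δ ^ 2 - δt ^ 2) := by
        nlinarith [hA2, pow_pos hδt 4]
      exact lt_of_mul_lt_mul_right h1 hδδ.le
    have hB2 : B ^ 2 ≤ δ ^ 2 := by nlinarith [hABsq, hA2, hAgt, hδδ]
    have : |B| ≤ |δ| := by
      rw [← Real.sqrt_sq_eq_abs, ← Real.sqrt_sq_eq_abs]
      exact Real.sqrt_le_sqrt hB2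
    rwa [abs_of_pos (lt_trans hδt hδ)] at this
  intro α β hab
  have := Convex.norm_image_sub_le_of_norm_deriv_le (s := Set.univ) (f := φ)
    (fun x _ => hφd x) (fun x _ => key x) convex_univ (Set.mem_univ β) (Set.mem_univ α)
  have hδpos : 0 < δ := lt_trans hδt hδ
  calc |φ α - φ β| ≤ δ * |α - β| := this
    _ ≤ δ * Real.pi := by
        exact mul_le_mul_of_nonneg_left hab hδpos.le
    _ = Real.pi * δ := mul_comm _ _
end

section
/- Assume f satisfies hypothesis (f≥g) with constants Z > θ₀ > 0. Let u be a classical solution of ∂_t u = Δu + f(t,u) on (0,∞)×ℝ^N with nonnegative, continuous, compactly supported, not identically zero initial datum, satisfying the invasion property with the same level Z. Then for all θ', θ with θ₀ < θ' < θ < Z, the centered inscribed radii satisfy liminf_{t→∞} ( r_{θ'}(t) − r_θ(t) ) < +∞. -/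
open Filter Metric Set
open scoped ENNReal NNReal

/-- At a minimum over `[a,b]` attained at `t ∈ (a,b]`, the derivative is `≤ 0`. -/
lemma deriv_nonpos_of_isMinOn_Ioc {ξ : ℝ → ℝ} {a b t d : ℝ}
    (ht : t ∈ Set.Ioc a b) (hmin : ∀ r ∈ Set.Icc a b, ξ t ≤ ξ r)
    (hd : HasDerivAt ξ d t) : d ≤ 0 := by
  have hslope : Tendsto (slope ξ t) (nhdsWithin t {t}ᶜ) (nhds d) :=
    hasDerivAt_iff_tendsto_slope.mp hd
  have hmono : nhdsWithin t (Set.Iio t) ≤ nhdsWithin t {t}ᶜ :=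
    nhdsWithin_mono _ (fun r hr => ne_of_lt hr)
  have hne : (nhdsWithin t (Set.Iio t)).NeBot := nhdsLT_neBot t
  have hev : ∀ᶠ r in nhdsWithin t (Set.Iio t), slope ξ t r ≤ 0 := by
    have hIoo : Set.Ioo a t ∈ nhdsWithin t (Set.Iio t) :=
      Ioo_mem_nhdsLT_of_mem ⟨ht.1, le_refl t⟩
    filter_upwards [hIoo] with r hr
    have h1 : ξ t ≤ ξ r := hmin r ⟨le_of_lt hr.1, le_trans (le_of_lt hr.2) ht.2⟩
    have h2 : r - t < 0 := by linarith [hr.2]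
    rw [slope_def_field]
    rw [div_nonpos_iff]
    exact Or.inl ⟨by linarith, by linarith⟩
  exact le_of_tendsto (hslope.mono_left hmono) hev

lemma deriv_nonneg_of_isMaxOn_Ioc {ξ : ℝ → ℝ} {a b t d : ℝ}
    (ht : t ∈ Set.Ioc a b) (hmax : ∀ r ∈ Set.Icc a b, ξ r ≤ ξ t)
    (hd : HasDerivAt ξ d t) : 0 ≤ d := by
  have := deriv_nonpos_of_isMinOn_Ioc (ξ := fun r => -ξ r) ht
    (fun r hr => by simpa using hmax r hr) hd.neg
  linarith

section lap
variable {N : ℕ} {φ : EuclideanSpace ℝ (Fin N) → ℝ} {x : EuclideanSpace ℝ (Fin N)}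

lemma line_hasDerivAt (x v : EuclideanSpace ℝ (Fin N)) (r : ℝ) :
    HasDerivAt (fun s : ℝ => x + s • v) v r := by
  simpa using ((hasDerivAt_id r).smul_const v).const_add x

lemma second_dir_hasDerivAt (hφ : ContDiff ℝ 2 φ) (x v : EuclideanSpace ℝ (Fin N)) :
    HasDerivAt (fun r : ℝ => fderiv ℝ φ (x + r • v) v)
      (fderiv ℝ (fun y => fderiv ℝ φ y v) x v) 0 := by
  have hG : Differentiable ℝ (fun y => fderiv ℝ φ y v) := by
    have h1 : ContDiff ℝ 1 (fderiv ℝ φ) := hφ.fderiv_right (by norm_num)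
    exact (ContinuousLinearMap.apply ℝ ℝ v).differentiable.comp (h1.differentiable one_ne_zero)
  have h2 := ((hG (x + (0:ℝ) • v)).hasFDerivAt.comp_hasDerivAt 0 (line_hasDerivAt x v 0))
  simp only [zero_smul, add_zero] at h2
  exact h2

/-- Second-derivative test along a line: at a local min, each pure second partial is ≥ 0. -/
lemma dir2_nonneg_of_isLocalMin (hφ : ContDiff ℝ 2 φ) (h : IsLocalMin φ x)
    (v : EuclideanSpace ℝ (Fin N)) :
    0 ≤ fderiv ℝ (fun y => fderiv ℝ φ y v) x v := by
  set L := fderiv ℝ (fun y => fderiv ℝ φ y v) x v with hL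
  by_contra hneg
  push_neg at hneg
  set q : ℝ → ℝ := fun r => φ (x + r • v) with hq
  set q' : ℝ → ℝ := fun r => fderiv ℝ φ (x + r • v) v with hq'
  have hdq : ∀ r : ℝ, HasDerivAt q (q' r) r := fun r =>
    (hφ.differentiable (by norm_num) (x + r • v)).hasFDerivAt.comp_hasDerivAt r
      (line_hasDerivAt x v r)
  have hlocmin : ∀ᶠ r in nhds (0:ℝ), q 0 ≤ q r := by
    have hcont : ContinuousAt (fun r : ℝ => x + r • v) 0 := (line_hasDerivAt x v 0).continuousAt
    have h0 : (fun r : ℝ => x + r • v) 0 = x := by simp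
    have := hcont.eventually (by rw [h0]; exact h)
    filter_upwards [this] with r hr
    simpa [hq, h0] using hr
  have hlocmin' : IsLocalMin q 0 := hlocmin
  have hq'0 : q' 0 = 0 := by
    have := hlocmin'.deriv_eq_zero
    rw [(hdq 0).deriv] at this
    exact this
  have hq'd : HasDerivAt q' L 0 := second_dir_hasDerivAt hφ x v
  -- slopes of q' near 0 tend to L < 0, and q' 0 = 0, so q' < 0 on a right interval
  have hslope : Tendsto (slope q' 0) (nhdsWithin 0 (Set.Ioi 0)) (nhds L) :=
    (hasDerivAt_iff_tendsto_slope.mp hq'd).mono_left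
      (nhdsWithin_mono _ (fun r hr => ne_of_gt hr))
  have hev : ∀ᶠ r in nhdsWithin 0 (Set.Ioi 0), slope q' 0 r < L / 2 :=
    hslope.eventually (eventually_lt_nhds (by linarith))
  obtain ⟨η, hη, hsub⟩ := (nhdsGT_basis (0:ℝ)).eventually_iff.mp hev
  have hq'neg : ∀ r ∈ Set.Ioo (0:ℝ) η, q' r < 0 := by
    intro r hr
    have := hsub ⟨hr.1, hr.2⟩
    rw [slope_def_field, hq'0] at this
    have h2 : (q' r - 0) / (r - 0) < L / 2 := by simpa using this
    have h3 : q' r / r < L / 2 := by simpa using h2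
    have : q' r < r * (L / 2) := by
      rw [div_lt_iff₀ hr.1] at h3; linarith
    nlinarith [hr.1, hneg]
  -- then q decreases on (0, η), contradicting local min
  have hdec : ∀ r ∈ Set.Ioo (0:ℝ) η, q r < q 0 := by
    intro r hr
    obtain ⟨c, hc, hceq⟩ := exists_hasDerivAt_eq_slope q q' hr.1
      (fun s _ => (hdq s).continuousAt.continuousWithinAt) (fun s hs => hdq s)
    have hcneg : q' c < 0 := hq'neg c ⟨hc.1, lt_trans hc.2 hr.2⟩
    have hrpos : (0:ℝ) < r - 0 := by simpa using hr.1
    rw [eq_div_iff (ne_of_gt hrpos)] at hceq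
    nlinarith [mul_neg_of_neg_of_pos hcneg hrpos]
  have hfreq : ∃ᶠ r in nhds (0:ℝ), r ∈ Set.Ioo (0:ℝ) η := by
    have : (nhdsWithin (0:ℝ) (Set.Ioi 0)).NeBot := nhdsGT_neBot 0
    have hIoo : Set.Ioo (0:ℝ) η ∈ nhdsWithin (0:ℝ) (Set.Ioi 0) :=
      Ioo_mem_nhdsGT_of_mem ⟨le_refl _, hη⟩
    have hevmem : ∀ᶠ r in nhdsWithin (0:ℝ) (Set.Ioi 0), r ∈ Set.Ioo 0 η :=
      eventually_of_mem hIoo fun _ hh => hh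
    exact hevmem.frequently.filter_mono nhdsWithin_le_nhds
  obtain ⟨r, hr1, hr2⟩ := (hfreq.and_eventually hlocmin).exists
  have := hdec r hr1
  linarith

end lap

section more
variable {N : ℕ} {φ ψ : EuclideanSpace ℝ (Fin N) → ℝ} {x : EuclideanSpace ℝ (Fin N)}

lemma laplacian_nonneg_of_isLocalMin (hφ : ContDiff ℝ 2 φ) (h : IsLocalMin φ x) :
    0 ≤ laplacian φ x :=
  Finset.sum_nonneg fun i _ => dir2_nonneg_of_isLocalMin hφ h _

lemma laplacian_neg (x : EuclideanSpace ℝ (Fin N)) :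
    laplacian (fun y => -φ y) x = -laplacian φ x := by
  unfold laplacian
  rw [← Finset.sum_neg_distrib]
  apply Finset.sum_congr rfl
  intro i _
  have h1 : (fun y => fderiv ℝ (fun z => -φ z) y (EuclideanSpace.single i (1:ℝ)))
      = fun y => -(fderiv ℝ φ y (EuclideanSpace.single i (1:ℝ))) := by
    funext y
    rw [fderiv_fun_neg]
    simp
  rw [h1, fderiv_fun_neg]
  simp

lemma laplacian_nonpos_of_isLocalMax (hφ : ContDiff ℝ 2 φ) (h : IsLocalMax φ x) :
    laplacian φ x ≤ 0 := by
  have := laplacian_nonneg_of_isLocalMin hφ.neg h.neg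
  rw [laplacian_neg] at this
  linarith

/-- differentiability of the first directional derivative -/
lemma diff_dirderiv (hφ : ContDiff ℝ 2 φ) (v : EuclideanSpace ℝ (Fin N)) :
    Differentiable ℝ (fun y => fderiv ℝ φ y v) := by
  have h1 : ContDiff ℝ 1 (fderiv ℝ φ) := hφ.fderiv_right (by norm_num)
  exact (ContinuousLinearMap.apply ℝ ℝ v).differentiable.comp (h1.differentiable one_ne_zero)

lemma laplacian_smul_add (hφ : ContDiff ℝ 2 φ) (hψ : ContDiff ℝ 2 ψ) (c : ℝ)
    (x : EuclideanSpace ℝ (Fin N)) :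
    laplacian (fun y => c * φ y + ψ y) x = c * laplacian φ x + laplacian ψ x := by
  unfold laplacian
  rw [Finset.mul_sum, ← Finset.sum_add_distrib]
  apply Finset.sum_congr rfl
  intro i _
  set v := EuclideanSpace.single i (1:ℝ)
  have h1 : (fun y => fderiv ℝ (fun z => c * φ z + ψ z) y v)
      = fun y => c * (fderiv ℝ φ y v) + fderiv ℝ ψ y v := by
    funext y
    rw [fderiv_fun_add ((hφ.differentiable (by norm_num) y).const_mul c)
      (hψ.differentiable (by norm_num) y),
      fderiv_const_mul (hφ.differentiable (by norm_num) y)]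
    simp
  rw [h1, fderiv_fun_add ((diff_dirderiv hφ v x).const_mul c) (diff_dirderiv hψ v x),
    fderiv_const_mul (diff_dirderiv hφ v x)]
  simp

end more

section explicit
open scoped RealInnerProductSpace
variable {N : ℕ} (x₀ e v x y : EuclideanSpace ℝ (Fin N)) (k a c b k₀ : ℝ)

lemma contDiff_pw : ContDiff ℝ 2 (fun x : EuclideanSpace ℝ (Fin N) =>
    k * Real.exp (a - ⟪e, x⟫)) := by
  exact contDiff_const.mul (ContDiff.exp
    (contDiff_const.sub (ContDiff.inner ℝ contDiff_const contDiff_id)))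

lemma contDiff_quad : ContDiff ℝ 2 (fun x : EuclideanSpace ℝ (Fin N) =>
    c * ⟪x - x₀, x - x₀⟫ + k₀) := by
  exact ContDiff.add (contDiff_const.mul (ContDiff.inner ℝ (contDiff_id.sub contDiff_const)
    (contDiff_id.sub contDiff_const))) contDiff_const

lemma pw_hasFDerivAt : HasFDerivAt (fun x : EuclideanSpace ℝ (Fin N) =>
    k * Real.exp (a - ⟪e, x⟫))
    ((k * Real.exp (a - ⟪e, y⟫)) • (-(innerSL ℝ e))) y := by
  have h1 : HasFDerivAt (fun x : EuclideanSpace ℝ (Fin N) => a - ⟪e, x⟫)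
      (-(innerSL ℝ e)) y := (innerSL ℝ e).hasFDerivAt.const_sub a
  have h2 := h1.exp
  have h3 := h2.const_mul k
  rw [smul_smul] at h3
  exact h3

lemma pw_fderiv_apply : fderiv ℝ (fun x : EuclideanSpace ℝ (Fin N) =>
    k * Real.exp (a - ⟪e, x⟫)) y v = (-(⟪e, v⟫) * k) * Real.exp (a - ⟪e, y⟫) := by
  rw [(pw_hasFDerivAt e y k a).fderiv]
  simp [innerSL_apply_apply]
  try ring

lemma lap_pw : laplacian (fun x : EuclideanSpace ℝ (Fin N) =>
    k * Real.exp (a - ⟪e, x⟫)) x = ⟪e, e⟫ * (k * Real.exp (a - ⟪e, x⟫)) := by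
  unfold laplacian
  have key : ∀ i : Fin N,
      fderiv ℝ (fun y => fderiv ℝ (fun z : EuclideanSpace ℝ (Fin N) =>
        k * Real.exp (a - ⟪e, z⟫)) y (EuclideanSpace.single i (1:ℝ))) x
        (EuclideanSpace.single i (1:ℝ))
      = (e i * e i) * (k * Real.exp (a - ⟪e, x⟫)) := by
    intro i
    set s := EuclideanSpace.single i (1:ℝ) with hs
    have hes : ⟪e, s⟫ = e i := by
      rw [hs, real_inner_comm, EuclideanSpace.inner_single_left]
      simp
    have h1 : (fun y : EuclideanSpace ℝ (Fin N) => fderiv ℝ (fun z =>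
        k * Real.exp (a - ⟪e, z⟫)) y s) = fun y => (-(⟪e, s⟫) * k) * Real.exp (a - ⟪e, y⟫) := by
      funext y
      exact pw_fderiv_apply e s y k a
    rw [h1, pw_fderiv_apply, hes]
    try ring
  rw [Finset.sum_congr rfl (fun i _ => key i), ← Finset.sum_mul]
  have hee : ⟪e, e⟫ = ∑ i, e i * e i := by
    rw [PiLp.inner_apply]
    simp [RCLike.inner_apply]
    exact Finset.sum_congr rfl (fun i _ => sq _)
  rw [hee]

end explicit

section quad
open scoped RealInnerProductSpace
variable {N : ℕ} (x₀ v x y : EuclideanSpace ℝ (Fin N)) (c k₀ : ℝ)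

lemma quad_fderiv_apply : fderiv ℝ (fun x : EuclideanSpace ℝ (Fin N) =>
    c * ⟪x - x₀, x - x₀⟫ + k₀) y v = (2 * c) * ⟪y - x₀, v⟫ := by
  have hf : HasFDerivAt (fun x : EuclideanSpace ℝ (Fin N) => x - x₀)
      (ContinuousLinearMap.id ℝ _) y := (hasFDerivAt_id y).sub_const x₀
  have h1 := (HasFDerivAt.inner ℝ hf hf).const_mul c
  have h2 := h1.add_const k₀
  rw [h2.fderiv]
  simp only [ContinuousLinearMap.coe_smul', Pi.smul_apply, ContinuousLinearMap.coe_comp',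
    Function.comp_apply, ContinuousLinearMap.prod_apply, ContinuousLinearMap.coe_id', id_eq]
  rw [fderivInnerCLM_apply]
  simp only [smul_eq_mul]
  rw [real_inner_comm v (y - x₀)]
  ring

lemma lap_quad : laplacian (fun x : EuclideanSpace ℝ (Fin N) =>
    c * ⟪x - x₀, x - x₀⟫ + k₀) x = c * (2 * N) := by
  unfold laplacian
  have key : ∀ i : Fin N,
      fderiv ℝ (fun y => fderiv ℝ (fun z : EuclideanSpace ℝ (Fin N) =>
        c * ⟪z - x₀, z - x₀⟫ + k₀) y (EuclideanSpace.single i (1:ℝ))) x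
        (EuclideanSpace.single i (1:ℝ)) = 2 * c := by
    intro i
    set s := EuclideanSpace.single i (1:ℝ) with hs
    have hss : ⟪s, s⟫ = 1 := by
      rw [hs, EuclideanSpace.inner_single_left]
      simp
    have h1 : (fun y : EuclideanSpace ℝ (Fin N) => fderiv ℝ (fun z =>
        c * ⟪z - x₀, z - x₀⟫ + k₀) y s) = fun y => (2 * c) * ⟪s, y⟫ - (2 * c) * ⟪s, x₀⟫ := by
      funext y
      rw [quad_fderiv_apply]
      rw [real_inner_comm s (y - x₀)]
      rw [inner_sub_right (𝕜 := ℝ)]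
      ring
    rw [h1]
    have h2 : HasFDerivAt (fun y : EuclideanSpace ℝ (Fin N) =>
        (2 * c) * ⟪s, y⟫ - (2 * c) * ⟪s, x₀⟫) ((2 * c) • (innerSL ℝ s)) x := by
      exact ((innerSL ℝ s).hasFDerivAt.const_mul (2 * c)).sub_const _
    rw [h2.fderiv]
    simp only [ContinuousLinearMap.coe_smul', Pi.smul_apply, innerSL_apply_apply, smul_eq_mul]
    rw [hss]
    ring
  rw [Finset.sum_congr rfl (fun i _ => key i)]
  simp
  ring

end quad


section cylinder
open scoped RealInnerProductSpace

set_option maxHeartbeats 1600000 in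
/-- Core parabolic argument: if `u > θ'` on a space-time cylinder, with (f≥g)-type
positivity of the nonlinearity above `θ'`, then the value at the center at the final
time has risen to `b`. -/
lemma cylinder_rise {N : ℕ} (hN : 0 < N) {f : ℝ → ℝ → ℝ} {g : ℝ → ℝ}
    {u : ℝ → EuclideanSpace ℝ (Fin N) → ℝ} {u₀ : EuclideanSpace ℝ (Fin N) → ℝ}
    (hu : IsClassicalSolution f u u₀)
    (hfg : ∀ t ≥ (0:ℝ), ∀ z ≥ (0:ℝ), g z ≤ f t z)
    {θ' b δ : ℝ} (hθ' : 0 < θ') (hδ : 0 < δ) (hθ'b : θ' < b)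
    (hgδ : ∀ z ∈ Set.Icc θ' b, δ ≤ g z)
    {s w : ℝ} (hs : 0 < s) (hsw : s < w) (hb : b = θ' + δ/2 * (w - s))
    {x₀ : EuclideanSpace ℝ (Fin N)} {ρ : ℝ} (hρ : 0 < ρ)
    (hε : b - θ' ≤ (δ/(8*N)) * ρ^2)
    (hprot : ∀ t ∈ Set.Icc s w, ∀ x ∈ Metric.closedBall x₀ ρ, θ' < u t x) :
    b ≤ u w x₀ := by
  by_contra hcon
  push_neg at hcon
  have hNR : (0:ℝ) < N := by exact_mod_cast hN
  set ε : ℝ := δ/(8*N) with hεdef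
  have hεpos : 0 < ε := by positivity
  set v : ℝ → EuclideanSpace ℝ (Fin N) → ℝ :=
    fun t x => θ' + δ/2 * (t - s) - ε * ⟪x - x₀, x - x₀⟫ with hv
  set Q : Set (ℝ × EuclideanSpace ℝ (Fin N)) :=
    Set.Icc s w ×ˢ Metric.closedBall x₀ ρ with hQ
  have hQc : IsCompact Q := isCompact_Icc.prod (isCompact_closedBall _ _)
  have hQne : Q.Nonempty := ⟨(s, x₀), by
    constructor
    · exact ⟨le_refl s, hsw.le⟩
    · simp [hρ.le]⟩
  set φfun : ℝ × EuclideanSpace ℝ (Fin N) → ℝ :=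
    fun p => u p.1 p.2 - v p.1 p.2 with hφfun
  have hQsub : Q ⊆ Set.Ici (0:ℝ) ×ˢ (Set.univ : Set (EuclideanSpace ℝ (Fin N))) := by
    rintro ⟨t, x⟩ ⟨ht, _⟩
    exact ⟨le_trans hs.le ht.1, trivial⟩
  have hvcont : Continuous fun p : ℝ × EuclideanSpace ℝ (Fin N) => v p.1 p.2 := by
    apply Continuous.sub
    · fun_prop
    · apply Continuous.mul continuous_const
      exact Continuous.inner (by fun_prop) (by fun_prop)
  have hφcont : ContinuousOn φfun Q :=
    ((hu.cont.mono hQsub).sub hvcont.continuousOn)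
  obtain ⟨p, hpQ, hpmin⟩ := hQc.exists_isMinOn hQne hφcont
  obtain ⟨tm, xm⟩ := p
  have htm : tm ∈ Set.Icc s w := hpQ.1
  have hxm : xm ∈ Metric.closedBall x₀ ρ := hpQ.2
  have hmin : ∀ q ∈ Q, φfun (tm, xm) ≤ φfun q := fun q hq => hpmin hq
  -- minimum value is negative
  have hvwx₀ : v w x₀ = b := by
    rw [hv]
    simp only [sub_self]
    rw [inner_zero_left]
    rw [hb]; ring
  have hmneg : φfun (tm, xm) < 0 := by
    have h1 := hmin (w, x₀) ⟨⟨hsw.le, le_refl w⟩, by simp [hρ.le]⟩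
    have : φfun (w, x₀) = u w x₀ - b := by rw [hφfun]; simp [hvwx₀]
    rw [this] at h1
    linarith
  -- tm > s
  have hinner_nonneg : ∀ x : EuclideanSpace ℝ (Fin N), (0:ℝ) ≤ ⟪x - x₀, x - x₀⟫ :=
    fun x => real_inner_self_nonneg
  have htms : s < tm := by
    rcases lt_or_eq_of_le htm.1 with h | h
    · exact h
    · exfalso
      have hu_pos := hprot tm htm xm hxm
      have : φfun (tm, xm) = u tm xm - θ' + ε * ⟪xm - x₀, xm - x₀⟫ := by
        rw [hφfun, hv, ← h]; ring_nf
      nlinarith [hinner_nonneg xm, hu_pos]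
  have htm0 : 0 < tm := lt_trans hs htms
  -- xm is interior
  have hxmlt : dist xm x₀ < ρ := by
    rcases lt_or_eq_of_le (Metric.mem_closedBall.mp hxm) with h | h
    · exact h
    · exfalso
      have hin : ⟪xm - x₀, xm - x₀⟫ = ρ^2 := by
        rw [real_inner_self_eq_norm_sq, ← dist_eq_norm, h]
      have hu_pos := hprot tm htm xm hxm
      have hφval : φfun (tm, xm) = u tm xm - (θ' + δ/2 * (tm - s) - ε * ρ^2) := by
        simp only [hφfun, hv]
        rw [hin]
      have h2 : δ/2 * (tm - s) ≤ δ/2 * (w - s) := by nlinarith [htm.2]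
      have h3 : θ' + δ/2 * (tm - s) - ε * ρ^2 ≤ θ' := by
        have : δ/2 * (w-s) = b - θ' := by rw [hb]; ring
        nlinarith
      have hlt : u tm xm - (θ' + δ/2 * (tm - s) - ε * ρ^2) < 0 := by
        rw [← hφval]; exact hmneg
      linarith
  -- value at touching point
  set zm : ℝ := u tm xm with hzm
  have hzm_gt : θ' < zm := hprot tm htm xm hxm
  have hzm_lt : zm < b := by
    have : zm - v tm xm < 0 := hmneg
    have hvle : v tm xm ≤ b := by
      rw [hv]
      have h2 : δ/2 * (tm - s) ≤ δ/2 * (w - s) := by nlinarith [htm.2]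
      have : δ/2 * (w-s) = b - θ' := by rw [hb]; ring
      nlinarith [hinner_nonneg xm]
    linarith
  have hgzm : δ ≤ g zm := hgδ zm ⟨hzm_gt.le, hzm_lt.le⟩
  have hfzm : δ ≤ f tm zm := le_trans hgzm (hfg tm htm0.le zm (by linarith))
  -- time derivative at the minimum
  have hdu : HasDerivAt (fun r => u r xm) (deriv (fun r => u r xm) tm) tm :=
    (hu.time_diff xm tm htm0).hasDerivAt
  set du : ℝ := deriv (fun r => u r xm) tm with hdu_def
  have hvd : HasDerivAt (fun r => v r xm) (δ/2) tm := by
    rw [hv]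
    have h1 : HasDerivAt (fun r : ℝ => θ' + δ/2 * (r - s) - ε * ⟪xm - x₀, xm - x₀⟫)
        (δ/2 * 1) tm := by
      exact ((((hasDerivAt_id tm).sub_const s).const_mul (δ/2)).const_add θ').sub_const _
    simp only [mul_one] at h1
    exact h1
  have hξ : HasDerivAt (fun r => u r xm - v r xm) (du - δ/2) tm := hdu.sub hvd
  have hξmin : ∀ r ∈ Set.Icc s w, (fun r => u r xm - v r xm) tm ≤ (fun r => u r xm - v r xm) r := by
    intro r hr
    exact hmin (r, xm) ⟨hr, hxm⟩
  have hdu_le : du - δ/2 ≤ 0 :=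
    deriv_nonpos_of_isMinOn_Ioc ⟨htms, htm.2⟩ hξmin hξ
  -- space: laplacian at the minimum
  set k₀ : ℝ := -(θ' + δ/2 * (tm - s)) with hk₀
  have hχeq : (fun x => u tm x - v tm x)
      = fun x => 1 * u tm x + (ε * ⟪x - x₀, x - x₀⟫ + k₀) := by
    funext x
    rw [hv, hk₀]; ring
  have husm := hu.space_smooth tm htm0
  have hχsm : ContDiff ℝ 2 (fun x => 1 * u tm x + (ε * ⟪x - x₀, x - x₀⟫ + k₀)) :=
    (contDiff_const.mul husm).add (contDiff_quad x₀ ε k₀)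
  have hχmin : IsLocalMin (fun x => u tm x - v tm x) xm := by
    have hball : Metric.closedBall x₀ ρ ∈ nhds xm := by
      apply _root_.mem_nhds_iff.mpr
      exact ⟨Metric.ball x₀ ρ, Metric.ball_subset_closedBall, Metric.isOpen_ball,
        Metric.mem_ball.mpr hxmlt⟩
    filter_upwards [hball] with x hx
    exact hmin (tm, x) ⟨htm, hx⟩
  have hlap_nonneg : 0 ≤ laplacian (fun x => u tm x - v tm x) xm := by
    rw [hχeq] at hχmin ⊢
    exact laplacian_nonneg_of_isLocalMin hχsm hχmin
  have hlap_split : laplacian (fun x => u tm x - v tm x) xm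
      = laplacian (u tm) xm + ε * (2 * N) := by
    rw [hχeq]
    rw [laplacian_smul_add husm (contDiff_quad x₀ ε k₀) 1, lap_quad]
    ring
  have hlapu : -(ε * (2 * N)) ≤ laplacian (u tm) xm := by
    rw [hlap_split] at hlap_nonneg; linarith
  -- PDE at the minimum
  have heqn := hu.eqn tm htm0 xm
  rw [← hdu_def] at heqn
  have h2Nε : ε * (2 * N) = δ/4 := by
    rw [hεdef]; field_simp; ring
  rw [h2Nε] at hlapu
  -- du = Δu + f ≥ -δ/4 + δ = 3δ/4 > δ/2 ≥ du
  have : du ≥ -(δ/4) + δ := by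
    rw [heqn]
    have : f tm (u tm xm) ≥ δ := hfzm
    linarith
  linarith

end cylinder


section planewave
open scoped RealInnerProductSpace

lemma laplacian_add {N : ℕ} {φ ψ : EuclideanSpace ℝ (Fin N) → ℝ}
    (hφ : ContDiff ℝ 2 φ) (hψ : ContDiff ℝ 2 ψ) (x : EuclideanSpace ℝ (Fin N)) :
    laplacian (fun y => φ y + ψ y) x = laplacian φ x + laplacian ψ x := by
  have h := laplacian_smul_add hφ hψ 1 x
  simpa using h

set_option maxHeartbeats 3200000 in
/-- Comparison with a plane-wave supersolution: a solution with subexponential initial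
datum stays below `A e^{(L+1)t - ⟨e,x⟩}`. -/
lemma planewave_bound {N : ℕ} {f : ℝ → ℝ → ℝ}
    {u : ℝ → EuclideanSpace ℝ (Fin N) → ℝ} {u₀ : EuclideanSpace ℝ (Fin N) → ℝ}
    (hu : IsClassicalSolution f u u₀) {L : ℝ≥0}
    (hLip : ∀ t > (0:ℝ), LipschitzWith L (fun z => f t z))
    (hf0 : ∀ t > (0:ℝ), f t 0 = 0)
    {A : ℝ} (hA : 0 < A) {e : EuclideanSpace ℝ (Fin N)} (he : ⟪e, e⟫ = 1)
    (hinit : ∀ x, u₀ x ≤ A * Real.exp (0 - ⟪e, x⟫)) :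
    ∀ t ≥ (0:ℝ), ∀ x, u t x ≤ A * Real.exp (((L:ℝ)+1) * t - ⟪e, x⟫) := by
  obtain ⟨lam, hlam⟩ : ∃ l : ℝ, l = (L:ℝ) + 1 := ⟨_, rfl⟩
  have hlampos : 0 < lam := by rw [hlam]; positivity
  rw [← hlam]
  intro tf htf xf
  rcases eq_or_lt_of_le htf with h0 | hT
  · rw [← h0, hu.init]
    have := hinit xf
    have heq : lam * 0 - ⟪e, xf⟫ = 0 - ⟪e, xf⟫ := by ring
    rw [heq]
    exact this
  obtain ⟨B₀, hB₀⟩ := hu.bounded tf hT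
  obtain ⟨B, hBnn, hBbd⟩ : ∃ B : ℝ, 0 ≤ B ∧ ∀ t ∈ Set.Icc (0:ℝ) tf, ∀ x, |u t x| ≤ B :=
    ⟨max B₀ 0, le_max_right _ _, fun t ht x => le_trans (hB₀ t ht x) (le_max_left _ _)⟩
  obtain ⟨K, hK⟩ : ∃ k : ℝ, k = 2*(N:ℝ) + 1 := ⟨_, rfl⟩
  have hKpos : 0 < K := by rw [hK]; positivity
  -- the key claim, for every ε > 0
  have key : ∀ ε > (0:ℝ), ∀ t ∈ Set.Icc (0:ℝ) tf, ∀ x : EuclideanSpace ℝ (Fin N),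
      (u t x - A * Real.exp (lam * t - ⟪e, x⟫)) * Real.exp (-lam * t)
        - ε * (⟪x, x⟫ + K * t + 1) ≤ 0 := by
    intro ε hε
    by_contra hcontra
    push_neg at hcontra
    obtain ⟨th, hth, xh, hxh⟩ := hcontra
    set ψfun : ℝ × EuclideanSpace ℝ (Fin N) → ℝ := fun p =>
      (u p.1 p.2 - A * Real.exp (lam * p.1 - ⟪e, p.2⟫)) * Real.exp (-lam * p.1)
        - ε * (⟪p.2, p.2⟫ + K * p.1 + 1) with hψfun
    -- outside a large ball, ψfun ≤ 0
    have hout : ∀ t ∈ Set.Icc (0:ℝ) tf, ∀ x : EuclideanSpace ℝ (Fin N),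
        Real.sqrt (B/ε) ≤ ‖x‖ → ψfun (t, x) ≤ 0 := by
      intro t ht x hx
      have h1 : (u t x - A * Real.exp (lam * t - ⟪e, x⟫)) * Real.exp (-lam * t) ≤ B := by
        have hW : 0 < A * Real.exp (lam * t - ⟪e, x⟫) := by positivity
        have hub : u t x ≤ B := le_trans (le_abs_self _) (hBbd t ht x)
        have hexple : Real.exp (-lam * t) ≤ 1 := by
          rw [Real.exp_le_one_iff]
          nlinarith [ht.1]
        have hexppos : 0 < Real.exp (-lam * t) := Real.exp_pos _
        nlinarith
      have h2 : B ≤ ε * ⟪x, x⟫ := by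
        have hxx : ⟪x, x⟫ = ‖x‖^2 := real_inner_self_eq_norm_sq x
        have hs : Real.sqrt (B/ε) ^ 2 ≤ ‖x‖^2 := by
          apply sq_le_sq' _ hx
          have := Real.sqrt_nonneg (B/ε)
          linarith [norm_nonneg x]
        rw [Real.sq_sqrt (by positivity : (0:ℝ) ≤ B/ε)] at hs
        rw [hxx]
        rw [div_le_iff₀ hε] at hs
        linarith [hs]
      have h3 : 0 ≤ ε * (K * t + 1) := by
        have ht1 := ht.1
        have hKt : 0 ≤ K * t := mul_nonneg hKpos.le ht1
        nlinarith
      simp only [hψfun]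
      nlinarith
    obtain ⟨R, hRb, hRxh⟩ : ∃ R : ℝ, Real.sqrt (B/ε) ≤ R ∧ ‖xh‖ + 1 ≤ R :=
      ⟨Real.sqrt (B/ε) + ‖xh‖ + 1, by linarith [norm_nonneg xh],
        by linarith [Real.sqrt_nonneg (B/ε)]⟩
    set S : Set (ℝ × EuclideanSpace ℝ (Fin N)) :=
      Set.Icc (0:ℝ) tf ×ˢ Metric.closedBall 0 R with hS
    have hSc : IsCompact S := isCompact_Icc.prod (isCompact_closedBall _ _)
    have hxhS : (th, xh) ∈ S := by
      refine ⟨hth, Metric.mem_closedBall.mpr ?_⟩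
      rw [dist_zero_right]
      linarith
    have hSsub : S ⊆ Set.Ici (0:ℝ) ×ˢ (Set.univ : Set (EuclideanSpace ℝ (Fin N))) := by
      rintro ⟨t, x⟩ ⟨ht, _⟩
      exact ⟨ht.1, trivial⟩
    have hψcont : ContinuousOn ψfun S := by
      apply ContinuousOn.sub
      · apply ContinuousOn.mul
        · apply ContinuousOn.sub (hu.cont.mono hSsub)
          apply Continuous.continuousOn
          apply Continuous.mul continuous_const
          apply Real.continuous_exp.comp
          apply Continuous.sub (by fun_prop)
          exact Continuous.inner continuous_const continuous_snd
        · fun_prop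
      · apply Continuous.continuousOn
        apply Continuous.mul continuous_const
        have hinn : Continuous fun p : ℝ × EuclideanSpace ℝ (Fin N) => (⟪p.2, p.2⟫ : ℝ) :=
          Continuous.inner continuous_snd continuous_snd
        fun_prop
    obtain ⟨p, hpS, hpmax⟩ := hSc.exists_isMaxOn ⟨(th, xh), hxhS⟩ hψcont
    obtain ⟨tm, xm⟩ := p
    have htm : tm ∈ Set.Icc (0:ℝ) tf := hpS.1
    have hxmS : xm ∈ Metric.closedBall 0 R := hpS.2
    have hmax : ∀ q ∈ S, ψfun q ≤ ψfun (tm, xm) := fun q hq => hpmax hq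
    have hψm_pos : 0 < ψfun (tm, xm) := lt_of_lt_of_le hxh (hmax (th, xh) hxhS)
    have hxmR : ‖xm‖ ≤ R := by
      have := Metric.mem_closedBall.mp hxmS
      rwa [dist_zero_right] at this
    have hspace_max : ∀ x : EuclideanSpace ℝ (Fin N), ψfun (tm, x) ≤ ψfun (tm, xm) := by
      intro x
      rcases le_or_gt ‖x‖ R with h | h
      · refine hmax (tm, x) ⟨htm, Metric.mem_closedBall.mpr ?_⟩
        rwa [dist_zero_right]
      · exact le_trans (hout tm htm x (by linarith)) hψm_pos.le
    -- the max has tm > 0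
    have htm_pos : 0 < tm := by
      rcases lt_or_eq_of_le htm.1 with h | h
      · exact h
      · exfalso
        have h1 : u 0 xm = u₀ xm := by rw [hu.init]
        have h2 : ψfun (0, xm) ≤ 0 := by
          simp only [hψfun]
          have h3 := hinit xm
          have hinn : (0:ℝ) ≤ ⟪xm, xm⟫ := real_inner_self_nonneg
          have h4 : (0:ℝ) ≤ ε * (⟪xm, xm⟫ + K * 0 + 1) := by nlinarith
          have h5 : u 0 xm - A * Real.exp (lam * 0 - ⟪e, xm⟫) ≤ 0 := by
            rw [h1]
            have heq0 : lam * 0 - ⟪e, xm⟫ = 0 - ⟪e, xm⟫ := by ring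
            rw [heq0]
            linarith
          have h6 : 0 < Real.exp (-lam * 0) := Real.exp_pos _
          nlinarith
        rw [← h] at hψm_pos
        linarith
    -- time derivative at the max
    have hdua : DifferentiableAt ℝ (fun r => u r xm) tm := hu.time_diff xm tm htm_pos
    have hdu : HasDerivAt (fun r => u r xm) (deriv (fun r => u r xm) tm) tm := hdua.hasDerivAt
    obtain ⟨du, hdu_def⟩ : ∃ d : ℝ, d = deriv (fun r => u r xm) tm := ⟨_, rfl⟩
    rw [← hdu_def] at hdu
    have hWd : HasDerivAt (fun r => A * Real.exp (lam * r - ⟪e, xm⟫))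
        (A * (Real.exp (lam * tm - ⟪e, xm⟫) * lam)) tm := by
      have h1 : HasDerivAt (fun r : ℝ => lam * r - ⟪e, xm⟫) (lam * 1) tm :=
        ((hasDerivAt_id tm).const_mul lam).sub_const _
      have h2 := (h1.exp).const_mul A
      simpa using h2
    have hexp : HasDerivAt (fun r : ℝ => Real.exp (-lam * r))
        (Real.exp (-lam * tm) * (-lam)) tm := by
      have h1 : HasDerivAt (fun r : ℝ => -lam * r) (-lam * 1) tm :=
        (hasDerivAt_id tm).const_mul (-lam)
      simpa using h1.exp
    have hprod := (hdu.sub hWd).mul hexp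
    have hlin : HasDerivAt (fun r : ℝ => ε * (⟪xm, xm⟫ + K * r + 1)) (ε * K) tm := by
      have h1 : HasDerivAt (fun r : ℝ => ⟪xm, xm⟫ + K * r + 1) (K * 1) tm :=
        (((hasDerivAt_id tm).const_mul K).const_add _).add_const 1
      have h2 := h1.const_mul ε
      simpa using h2
    have hζ := hprod.sub hlin
    have hζmax : ∀ r ∈ Set.Icc (0:ℝ) tf,
        (fun r => (u r xm - A * Real.exp (lam * r - ⟪e, xm⟫)) * Real.exp (-lam * r)
          - ε * (⟪xm, xm⟫ + K * r + 1)) r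
        ≤ (fun r => (u r xm - A * Real.exp (lam * r - ⟪e, xm⟫)) * Real.exp (-lam * r)
          - ε * (⟪xm, xm⟫ + K * r + 1)) tm := by
      intro r hr
      exact hmax (r, xm) ⟨hr, hxmS⟩
    have hd0 : 0 ≤ (du - A * (Real.exp (lam * tm - ⟪e, xm⟫) * lam)) * Real.exp (-lam * tm)
        + (u tm xm - A * Real.exp (lam * tm - ⟪e, xm⟫)) * (Real.exp (-lam * tm) * (-lam))
        - ε * K :=
      deriv_nonneg_of_isMaxOn_Ioc ⟨htm_pos, htm.2⟩ hζmax hζ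
    -- space: laplacian at the max
    have husm := hu.space_smooth tm htm_pos
    have hχsm : ContDiff ℝ 2 (fun x => Real.exp (-lam*tm) * u tm x
        + ((-(Real.exp (-lam*tm) * A)) * Real.exp (lam*tm - ⟪e, x⟫)
          + ((-ε) * ⟪x - 0, x - 0⟫ + (-(ε * (K*tm + 1)))))) :=
      (contDiff_const.mul husm).add ((contDiff_pw e (-(Real.exp (-lam*tm) * A)) (lam*tm)).add
        (contDiff_quad 0 (-ε) (-(ε * (K*tm + 1)))))
    have hχeq : ∀ x : EuclideanSpace ℝ (Fin N), ψfun (tm, x)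
        = Real.exp (-lam*tm) * u tm x
        + ((-(Real.exp (-lam*tm) * A)) * Real.exp (lam*tm - ⟪e, x⟫)
          + ((-ε) * ⟪x - 0, x - 0⟫ + (-(ε * (K*tm + 1))))) := by
      intro x
      simp only [hψfun, sub_zero]
      ring
    have hχmax : IsLocalMax (fun x => Real.exp (-lam*tm) * u tm x
        + ((-(Real.exp (-lam*tm) * A)) * Real.exp (lam*tm - ⟪e, x⟫)
          + ((-ε) * ⟪x - 0, x - 0⟫ + (-(ε * (K*tm + 1)))))) xm := by
      apply Filter.Eventually.of_forall
      intro x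
      have h := hspace_max x
      rw [hχeq x, hχeq xm] at h
      exact h
    have hlapχ := laplacian_nonpos_of_isLocalMax hχsm hχmax
    have hsplit : laplacian (fun x => Real.exp (-lam*tm) * u tm x
        + ((-(Real.exp (-lam*tm) * A)) * Real.exp (lam*tm - ⟪e, x⟫)
          + ((-ε) * ⟪x - 0, x - 0⟫ + (-(ε * (K*tm + 1)))))) xm
        = Real.exp (-lam*tm) * laplacian (u tm) xm
          + (⟪e, e⟫ * ((-(Real.exp (-lam*tm) * A)) * Real.exp (lam*tm - ⟪e, xm⟫))
            + (-ε) * (2 * N)) := by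
      rw [laplacian_smul_add husm ((contDiff_pw e (-(Real.exp (-lam*tm) * A)) (lam*tm)).add
        (contDiff_quad 0 (-ε) (-(ε * (K*tm + 1))))) (Real.exp (-lam*tm)) xm]
      rw [laplacian_add (contDiff_pw e (-(Real.exp (-lam*tm) * A)) (lam*tm))
        (contDiff_quad 0 (-ε) (-(ε * (K*tm + 1)))) xm]
      rw [lap_pw, lap_quad]
    rw [hsplit, he] at hlapχ
    -- PDE and Lipschitz bound
    have heqn := hu.eqn tm htm_pos xm
    rw [← hdu_def] at heqn
    have hflip : |f tm (u tm xm) - f tm 0| ≤ (L:ℝ) * |u tm xm - 0| := by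
      have h1 := (hLip tm htm_pos).dist_le_mul (u tm xm) 0
      simpa [Real.dist_eq] using h1
    rw [hf0 tm htm_pos] at hflip
    -- positivity of u at the max
    have hexppos : (0:ℝ) < Real.exp (-lam*tm) := Real.exp_pos _
    have hWpos : (0:ℝ) < A * Real.exp (lam * tm - ⟪e, xm⟫) := by positivity
    have hinn_m : (0:ℝ) ≤ ⟪xm, xm⟫ := real_inner_self_nonneg
    have hX : (0:ℝ) < ⟪xm, xm⟫ + K * tm + 1 := by nlinarith [mul_nonneg hKpos.le htm.1]
    have hεterm : (0:ℝ) < ε * (⟪xm, xm⟫ + K * tm + 1) := mul_pos hε hX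
    have hψm_pos' : 0 < (u tm xm - A * Real.exp (lam * tm - ⟪e, xm⟫)) * Real.exp (-lam * tm)
        - ε * (⟪xm, xm⟫ + K * tm + 1) := hψm_pos
    have hWlt : A * Real.exp (lam * tm - ⟪e, xm⟫) < u tm xm := by
      nlinarith
    have hupos : 0 < u tm xm := lt_trans hWpos hWlt
    have hfle : f tm (u tm xm) ≤ (L:ℝ) * u tm xm := by
      have h1 : f tm (u tm xm) ≤ |f tm (u tm xm)| := le_abs_self _
      have h2 : |u tm xm - 0| = u tm xm := by
        rw [sub_zero, abs_of_pos hupos]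
      rw [h2] at hflip
      calc f tm (u tm xm) ≤ |f tm (u tm xm)| := h1
        _ = |f tm (u tm xm) - 0| := by rw [sub_zero]
        _ ≤ (L:ℝ) * u tm xm := hflip
    -- assemble the contradiction
    have hmulf : f tm (u tm xm) * Real.exp (-lam*tm) ≤ ((L:ℝ) * u tm xm) * Real.exp (-lam*tm) :=
      mul_le_mul_of_nonneg_right hfle hexppos.le
    have hdueq : du * Real.exp (-lam*tm)
        = laplacian (u tm) xm * Real.exp (-lam*tm) + f tm (u tm xm) * Real.exp (-lam*tm) := by
      rw [heqn]; ring
    have hWltc : A * Real.exp (lam * tm - ⟪e, xm⟫) * Real.exp (-lam*tm)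
        < u tm xm * Real.exp (-lam*tm) := mul_lt_mul_of_pos_right hWlt hexppos
    subst hlam
    subst hK
    nlinarith [hd0, hlapχ, hdueq, hmulf, hWltc, hεterm, hε]
  -- conclude from the key claim by letting ε → 0
  have hc : 0 < ⟪xf, xf⟫ + K * tf + 1 := by
    have hinn : (0:ℝ) ≤ ⟪xf, xf⟫ := real_inner_self_nonneg
    nlinarith [hT]
  have hG : (u tf xf - A * Real.exp (lam * tf - ⟪e, xf⟫)) * Real.exp (-lam * tf) ≤ 0 := by
    by_contra hpos
    push_neg at hpos
    obtain ⟨G, hGdef⟩ : ∃ G : ℝ,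
        G = (u tf xf - A * Real.exp (lam * tf - ⟪e, xf⟫)) * Real.exp (-lam * tf) := ⟨_, rfl⟩
    rw [← hGdef] at hpos
    have hεa : 0 < G / (2 * (⟪xf, xf⟫ + K * tf + 1)) := by positivity
    have h1 := key _ hεa tf ⟨le_of_lt hT, le_refl tf⟩ xf
    rw [← hGdef] at h1
    have hne : (⟪xf, xf⟫ + K * tf + 1) ≠ 0 := ne_of_gt hc
    have hgen : ∀ (G' X : ℝ), X ≠ 0 → G' / (2 * X) * X = G' / 2 := by
      intro G' X hX
      field_simp
    have h2 : G / (2 * (⟪xf, xf⟫ + K * tf + 1)) * (⟪xf, xf⟫ + K * tf + 1) = G / 2 :=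
      hgen G _ hne
    rw [h2] at h1
    linarith
  have h3 : u tf xf - A * Real.exp (lam * tf - ⟪e, xf⟫) ≤ 0 := by
    by_contra h4
    push_neg at h4
    nlinarith [Real.exp_pos (-lam * tf)]
  linarith

end planewave


section assembly
open scoped RealInnerProductSpace

/-- Existence of a uniform exponential dominating constant for the initial datum. -/
lemma exists_init_bound {N : ℕ} {u₀ : EuclideanSpace ℝ (Fin N) → ℝ}
    (hu₀cont : Continuous u₀) (hu₀supp : HasCompactSupport u₀) :
    ∃ A : ℝ, 0 < A ∧ ∀ e : EuclideanSpace ℝ (Fin N), ⟪e, e⟫ = 1 →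
      ∀ y, u₀ y ≤ A * Real.exp (0 - ⟪e, y⟫) := by
  obtain ⟨M₀, hM₀⟩ := hu₀supp.exists_bound_of_continuous hu₀cont
  have hM₀nn : 0 ≤ M₀ := le_trans (norm_nonneg (u₀ 0)) (hM₀ 0)
  obtain ⟨ρ₀', hρ₀'⟩ := hu₀supp.isBounded.subset_closedBall 0
  refine ⟨(M₀ + 1) * Real.exp (max ρ₀' 0), by positivity, ?_⟩
  intro e he y
  have hne : ‖e‖ = 1 := by
    have h1 : ‖e‖^2 = 1 := by rw [← real_inner_self_eq_norm_sq, he]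
    rw [← Real.sqrt_sq (norm_nonneg e), h1, Real.sqrt_one]
  by_cases hy : y ∈ tsupport u₀
  · have hyn : ‖y‖ ≤ max ρ₀' 0 := by
      have := hρ₀' hy
      rw [Metric.mem_closedBall, dist_zero_right] at this
      exact le_trans this (le_max_left _ _)
    have hip : ⟪e, y⟫ ≤ max ρ₀' 0 := by
      have h1 := real_inner_le_norm e y
      rw [hne, one_mul] at h1
      linarith
    have h2 : (M₀ + 1) * Real.exp (max ρ₀' 0) * Real.exp (0 - ⟪e, y⟫)
        = (M₀ + 1) * Real.exp (max ρ₀' 0 + (0 - ⟪e, y⟫)) := by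
      rw [Real.exp_add]; ring
    rw [h2]
    have h3 : (1:ℝ) ≤ Real.exp (max ρ₀' 0 + (0 - ⟪e, y⟫)) := by
      rw [← Real.exp_zero]
      apply Real.exp_le_exp.mpr
      linarith
    have h4 : u₀ y ≤ M₀ := le_trans (le_abs_self _) (hM₀ y)
    nlinarith
  · have h0 : u₀ y = 0 := image_eq_zero_of_notMem_tsupport hy
    rw [h0]
    positivity

/-- Radial exponential bound for the solution. -/
lemma radial_bound {N : ℕ} (hN : 0 < N) {f : ℝ → ℝ → ℝ}
    {u : ℝ → EuclideanSpace ℝ (Fin N) → ℝ} {u₀ : EuclideanSpace ℝ (Fin N) → ℝ}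
    (hu : IsClassicalSolution f u u₀) {L : ℝ≥0}
    (hLip : ∀ t > (0:ℝ), LipschitzWith L (fun z => f t z))
    (hf0 : ∀ t > (0:ℝ), f t 0 = 0)
    (hu₀cont : Continuous u₀) (hu₀supp : HasCompactSupport u₀) :
    ∃ A : ℝ, 0 < A ∧ ∀ t ≥ (0:ℝ), ∀ x, u t x ≤ A * Real.exp (((L:ℝ)+1) * t - ‖x‖) := by
  obtain ⟨A, hA, hinit⟩ := exists_init_bound hu₀cont hu₀supp
  refine ⟨A, hA, ?_⟩
  intro t ht x
  obtain ⟨e, he1, he2⟩ : ∃ e : EuclideanSpace ℝ (Fin N), ⟪e, e⟫ = 1 ∧ ⟪e, x⟫ = ‖x‖ := by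
    by_cases hx : x = 0
    · refine ⟨EuclideanSpace.single (⟨0, hN⟩ : Fin N) (1:ℝ), ?_, ?_⟩
      · rw [EuclideanSpace.inner_single_left]
        simp
      · rw [hx]
        simp
    · have hxn : (0:ℝ) < ‖x‖ := norm_pos_iff.mpr hx
      refine ⟨‖x‖⁻¹ • x, ?_, ?_⟩
      · rw [real_inner_smul_left, real_inner_smul_right, real_inner_self_eq_norm_sq]
        field_simp
      · rw [real_inner_smul_left, real_inner_self_eq_norm_sq]
        field_simp
  have := planewave_bound hu hLip hf0 hA he1 (hinit e he1) t ht x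
  rwa [he2] at this

/-- Upper bound for radii of balls inside upper level sets. -/
lemma level_radius_bound {N : ℕ} (hN : 0 < N)
    {u : ℝ → EuclideanSpace ℝ (Fin N) → ℝ} {A lam θ : ℝ}
    (hθ : 0 < θ) (hA : 0 < A) (hlam : 0 ≤ lam)
    (hrad : ∀ t ≥ (0:ℝ), ∀ x, u t x ≤ A * Real.exp (lam * t - ‖x‖))
    {t : ℝ} (ht : 0 ≤ t) :
    ∀ r ∈ {r : ℝ | ∀ x : EuclideanSpace ℝ (Fin N), ‖x‖ < r → θ < u t x},
      r ≤ lam * t + (max (Real.log (A/θ)) 0 + 1) := by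
  intro r hr
  by_contra hcon
  push_neg at hcon
  obtain ⟨m, hm⟩ : ∃ m : ℝ, m = lam * t + (max (Real.log (A/θ)) 0 + 1) := ⟨_, rfl⟩
  rw [← hm] at hcon
  have hmpos : 0 < m := by
    rw [hm]
    have h1 : 0 ≤ lam * t := mul_nonneg hlam ht
    have h2 : (0:ℝ) ≤ max (Real.log (A/θ)) 0 := le_max_right _ _
    linarith
  obtain ⟨y, hy⟩ : ∃ y : EuclideanSpace ℝ (Fin N), ‖y‖ = m :=
    ⟨EuclideanSpace.single (⟨0, hN⟩ : Fin N) m, by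
      rw [EuclideanSpace.norm_single, Real.norm_eq_abs, abs_of_pos hmpos]⟩
  have h1 : θ < u t y := hr y (by rw [hy]; exact hcon)
  have h2 : u t y ≤ A * Real.exp (lam * t - m) := by
    have := hrad t ht y
    rwa [hy] at this
  have h3 : Real.exp (lam * t - m) < Real.exp (- Real.log (A/θ)) := by
    apply Real.exp_lt_exp.mpr
    rw [hm]
    have := le_max_left (Real.log (A/θ)) 0
    linarith
  have h4 : Real.exp (- Real.log (A/θ)) = θ/A := by
    rw [Real.exp_neg, Real.exp_log (by positivity)]
    rw [inv_div]
  rw [h4] at h3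
  have h5 : A * Real.exp (lam * t - m) < A * (θ/A) := by
    exact mul_lt_mul_of_pos_left h3 hA
  rw [mul_div_cancel₀ _ (ne_of_gt hA)] at h5
  linarith

/-- Window selection: if `F` is nonneg and grows at most linearly, there are
arbitrarily late windows of length `τ` over which `F` never drops more than `K`
below its final value. -/
lemma exists_good_window {F : ℝ → ℝ} {lam c₀ τ K T₁ : ℝ}
    (hτ : 0 < τ) (hlam : 0 ≤ lam) (hK : lam * τ + 1 ≤ K)
    (h0 : ∀ t, T₁ ≤ t → 0 ≤ F t) (hlin : ∀ t, T₁ ≤ t → F t ≤ lam * t + c₀) :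
    ∃ w, T₁ + τ ≤ w ∧ ∀ t ∈ Set.Icc (w - τ) w, F w - K ≤ F t := by
  by_contra hbad
  push_neg at hbad
  -- hbad : ∀ w, T₁ + τ ≤ w → ∃ t ∈ Icc (w-τ) w, F t < F w - K
  have claim : ∀ k : ℕ, ∀ w, T₁ + k * τ ≤ w → (k : ℝ) * K ≤ F w := by
    intro k
    induction k with
    | zero =>
      intro w hw
      simp only [Nat.cast_zero, zero_mul]
      apply h0
      simpa using hw
    | succ n ih =>
      intro w hw
      have hw' : T₁ + τ ≤ w := by
        have h1 : (1:ℝ) ≤ ((n:ℝ) + 1) := by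
          have := Nat.cast_nonneg (α := ℝ) n
          linarith
        have h2 : τ ≤ ((n:ℝ)+1) * τ := by nlinarith
        push_cast at hw
        linarith
      obtain ⟨t, htmem, hdrop⟩ := hbad w hw'
      have ht' : T₁ + n * τ ≤ t := by
        push_cast at hw
        have := htmem.1
        linarith
      have := ih t ht'
      push_cast
      linarith
  -- contradiction with linear growth
  have hgrow : ∀ k : ℕ, (k:ℝ) * K ≤ lam * (T₁ + k * τ) + c₀ := by
    intro k
    have h1 : T₁ + (k:ℝ) * τ ≤ T₁ + k * τ := le_refl _
    have h2 := claim k (T₁ + k * τ) (le_refl _)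
    have h3 := hlin (T₁ + k * τ) (by nlinarith [Nat.cast_nonneg (α := ℝ) k])
    linarith
  obtain ⟨k, hk⟩ := exists_nat_gt (lam * T₁ + c₀)
  have h1 := hgrow k
  have h2 : (k:ℝ) * (lam * τ) + (k:ℝ) * 1 ≤ (k:ℝ) * K := by
    have := Nat.cast_nonneg (α := ℝ) k
    nlinarith
  nlinarith

end assembly


/-- Under hypothesis (f≥g), for an invading solution with compactly
supported initial datum and levels `θ₀ < θ' < θ < Z`, the centered inscribed radii
satisfy `liminf_{t→∞} (r_{θ'}(t) − r_θ(t)) < +∞`, i.e. the difference is frequently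
bounded by some constant `C`. -/
theorem liminf_centeredRadius_sub_lt_top
    {N : ℕ} (hN : 0 < N) (f : ℝ → ℝ → ℝ) (hf : StandingAssumptions f)
    (g : ℝ → ℝ) (θ₀ Z : ℝ) (hfg : HypFG f g θ₀ Z)
    (u₀ : EuclideanSpace ℝ (Fin N) → ℝ)
    (hu₀nn : ∀ x, 0 ≤ u₀ x) (hu₀cont : Continuous u₀)
    (hu₀supp : HasCompactSupport u₀) (hu₀ne : u₀ ≠ 0)
    (u : ℝ → EuclideanSpace ℝ (Fin N) → ℝ) (hu : IsClassicalSolution f u u₀)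
    (hinv : Invades u (ENNReal.ofReal Z))
    (θ' θ : ℝ) (h1 : θ₀ < θ') (h2 : θ' < θ) (h3 : θ < Z) :
    ∃ C : ℝ, ∃ᶠ t in atTop, centeredRadius u θ' t - centeredRadius u θ t ≤ C := by
    by_contra hcon
    push_neg at hcon
    -- unpack the standing assumptions and (f ≥ g)
    obtain ⟨-, ⟨L, hLip⟩, hf0⟩ := hf
    obtain ⟨hgcont, hgf, hθ₀pos, hθ₀Z, -, hgpos, -⟩ := hfg
    have hθ'pos : 0 < θ' := lt_trans hθ₀pos h1
    have hθpos : 0 < θ := lt_trans hθ'pos h2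
    -- the intermediate level b and the positivity constant δ
    obtain ⟨b, hbdef⟩ : ∃ b : ℝ, b = (θ + Z)/2 := ⟨_, rfl⟩
    have hθb : θ < b := by rw [hbdef]; linarith
    have hbZ : b < Z := by rw [hbdef]; linarith
    have hθ'b : θ' < b := lt_trans h2 hθb
    have hIccsub : Set.Icc θ' b ⊆ Set.Ici (0:ℝ) := fun z hz => le_trans hθ'pos.le hz.1
    obtain ⟨z₀, hz₀mem, hz₀min⟩ := isCompact_Icc.exists_isMinOn
      (Set.nonempty_Icc.mpr hθ'b.le) (hgcont.mono hIccsub)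
    obtain ⟨δ, hδdef⟩ : ∃ d : ℝ, d = g z₀ := ⟨_, rfl⟩
    have hδpos : 0 < δ := by
      rw [hδdef]
      exact hgpos z₀ ⟨lt_of_lt_of_le h1 hz₀mem.1, lt_of_le_of_lt hz₀mem.2 hbZ⟩
    have hgδ : ∀ z ∈ Set.Icc θ' b, δ ≤ g z := fun z hz => hδdef ▸ hz₀min hz
    -- geometric constants
    obtain ⟨lam, hlamdef⟩ : ∃ l : ℝ, l = ((L:ℝ)+1) := ⟨_, rfl⟩
    have hlampos : 0 < lam := by rw [hlamdef]; positivity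
    obtain ⟨τ, hτdef⟩ : ∃ t : ℝ, t = 2*(b - θ')/δ := ⟨_, rfl⟩
    have hτpos : 0 < τ := by
      rw [hτdef]
      exact div_pos (by linarith) hδpos
    have hbτ : b = θ' + δ/2 * τ := by
      have hδne : δ ≠ 0 := ne_of_gt hδpos
      rw [hτdef]
      field_simp
      ring
    have hNpos : (0:ℝ) < N := by exact_mod_cast hN
    obtain ⟨ρ, hρdef⟩ : ∃ r : ℝ, r = Real.sqrt ((b - θ')*(8*N)/δ) := ⟨_, rfl⟩
    have hquot_pos : 0 < (b - θ')*(8*(N:ℝ))/δ :=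
      div_pos (mul_pos (by linarith) (by positivity)) hδpos
    have hρpos : 0 < ρ := by
      rw [hρdef]
      exact Real.sqrt_pos.mpr hquot_pos
    have hρsq : (δ/(8*N)) * ρ^2 = b - θ' := by
      have hδne : δ ≠ 0 := ne_of_gt hδpos
      have hNne : (N:ℝ) ≠ 0 := ne_of_gt hNpos
      rw [hρdef, Real.sq_sqrt hquot_pos.le]
      field_simp
    -- radial exponential bound and level-set radius bounds
    obtain ⟨A, hA, hrad'⟩ := radial_bound hN hu hLip hf0 hu₀cont hu₀supp
    have hrad : ∀ t ≥ (0:ℝ), ∀ x, u t x ≤ A * Real.exp (lam * t - ‖x‖) := by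
      rw [hlamdef]; exact hrad'
    obtain ⟨c₀, hc₀def⟩ : ∃ c : ℝ, c = max (Real.log (A/θ)) 0 + 1 := ⟨_, rfl⟩
    have hbound : ∀ t : ℝ, 0 ≤ t →
        ∀ r ∈ {r : ℝ | ∀ x : EuclideanSpace ℝ (Fin N), ‖x‖ < r → θ < u t x},
        r ≤ lam*t + c₀ := by
      intro t ht
      rw [hc₀def]
      exact level_radius_bound hN hθpos hA hlampos.le hrad ht
    have hS0 : ∀ (η t : ℝ), (0:ℝ) ∈ {r : ℝ | ∀ x : EuclideanSpace ℝ (Fin N), ‖x‖ < r → η < u t x} := by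
      intro η t x hx
      exact absurd hx (not_lt.mpr (norm_nonneg x))
    have hSbdd : ∀ t : ℝ, 0 ≤ t →
        BddAbove {r : ℝ | ∀ x : EuclideanSpace ℝ (Fin N), ‖x‖ < r → θ < u t x} :=
      fun t ht => ⟨lam*t + c₀, fun r hr => hbound t ht r hr⟩
    have hF0 : ∀ t : ℝ, 0 ≤ t → 0 ≤ centeredRadius u θ t :=
      fun t ht => le_csSup (hSbdd t ht) (hS0 θ t)
    have hFlin : ∀ t : ℝ, 0 ≤ t → centeredRadius u θ t ≤ lam*t + c₀ :=
      fun t ht => csSup_le ⟨0, hS0 θ t⟩ (hbound t ht)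
    -- the opponent's eventual bound
    obtain ⟨K, hKdef⟩ : ∃ k : ℝ, k = lam * τ + 1 := ⟨_, rfl⟩
    obtain ⟨C, hCdef⟩ : ∃ c : ℝ, c = K + ρ + 2 := ⟨_, rfl⟩
    have hev := hcon C
    rw [Filter.eventually_atTop] at hev
    obtain ⟨T₀, hT₀⟩ := hev
    have hT₀' : ∀ t ≥ T₀, C < centeredRadius u θ' t - centeredRadius u θ t := by
      intro t ht
      have := hT₀ t ht
      exact this
    -- select a good window
    obtain ⟨T₁, hT₁T₀, hT₁1⟩ : ∃ T₁ : ℝ, T₀ ≤ T₁ ∧ 1 ≤ T₁ :=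
      ⟨max T₀ 1, le_max_left _ _, le_max_right _ _⟩
    obtain ⟨w, hw1, hwin⟩ := exists_good_window (F := fun t => centeredRadius u θ t)
      hτpos hlampos.le (le_of_eq hKdef.symm)
      (fun t ht => hF0 t (by linarith))
      (fun t ht => hFlin t (by linarith))
    have hw0 : 0 < w - τ := by linarith
    have hwpos : 0 < w := by linarith
    -- a dip point at time w
    have hnotmem : centeredRadius u θ w + 1 ∉
        {r : ℝ | ∀ x : EuclideanSpace ℝ (Fin N), ‖x‖ < r → θ < u w x} := by
      intro hmem
      have := le_csSup (hSbdd w hwpos.le) hmem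
      have heq : centeredRadius u θ w
          = sSup {r : ℝ | ∀ x : EuclideanSpace ℝ (Fin N), ‖x‖ < r → θ < u w x} := rfl
      rw [← heq] at this
      linarith
    rw [Set.mem_setOf_eq] at hnotmem
    push_neg at hnotmem
    obtain ⟨x₀, hx₀n, hx₀dip⟩ := hnotmem
    -- protection of the cylinder by the θ' level set
    have hprot : ∀ t ∈ Set.Icc (w - τ) w, ∀ x ∈ Metric.closedBall x₀ ρ, θ' < u t x := by
      intro t ht x hx
      have htT₀ : T₀ ≤ t := by
        have := ht.1
        linarith
      have hCt := hT₀' t htT₀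
      have hFtw := hwin t ht
      have hxn : ‖x‖ ≤ ‖x₀‖ + ρ := by
        have h1 : ‖x‖ - ‖x₀‖ ≤ ‖x - x₀‖ := norm_sub_norm_le x x₀
        have h2 : ‖x - x₀‖ ≤ ρ := by
          rw [← dist_eq_norm]
          exact Metric.mem_closedBall.mp hx
        linarith
      have hchain : ‖x‖ < centeredRadius u θ' t := by
        rw [hCdef] at hCt
        rw [hKdef] at hCt hFtw
        linarith
      have hlt : ‖x‖ < sSup {r : ℝ | ∀ y : EuclideanSpace ℝ (Fin N), ‖y‖ < r → θ' < u t y} :=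
        hchain
      obtain ⟨r', hr'mem, hr'⟩ := exists_lt_of_lt_csSup ⟨0, hS0 θ' t⟩ hlt
      exact hr'mem x hr'
    -- apply the parabolic rise lemma to reach a contradiction
    have hbτ' : b = θ' + δ/2 * (w - (w - τ)) := by
      have heq : w - (w - τ) = τ := by ring
      rw [heq]
      exact hbτ
    have hrise := cylinder_rise hN hu hgf hθ'pos hδpos hθ'b hgδ hw0
      (by linarith : w - τ < w) hbτ' hρpos (le_of_eq hρsq.symm) hprot
    linarith
end

section
/- Let ζ > 0 and let u : [0,∞)×ℝ^N → ℝ be continuous, nonnegative, bounded on [0,T]×ℝ^N for every T>0, C¹ in t and C² in x on (0,∞)×ℝ^N, with compactly supported initial datum u(0,·), and satisfying the differential inequality ∂_t u ≤ Δu + ζ u pointwise on (0,∞)×ℝ^N. Then for every c > 2√ζ one has lim_{t→∞} sup_{|x| ≥ ct} u(t,x) = 0; that is, the linear equation ∂_t u = Δu + ζu has finite speed of spreading c* = 2√ζ. -/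
open Filter Metric Set

open Topology RealInnerProductSpace

lemma deriv2_nonpos_of_isLocalMax {g : ℝ → ℝ} (hg : Differentiable ℝ g)
    (hg' : DifferentiableAt ℝ (deriv g) 0) (hmax : IsLocalMax g 0) :
    deriv (deriv g) 0 ≤ 0 := by
  by_contra h
  push_neg at h
  have h0 : deriv g 0 = 0 := hmax.deriv_eq_zero
  have hslope : Tendsto (slope (deriv g) 0) (𝓝[≠] 0) (𝓝 (deriv (deriv g) 0)) :=
    hasDerivAt_iff_tendsto_slope.1 hg'.hasDerivAt
  have hpos : ∀ᶠ s in 𝓝[>] (0:ℝ), 0 < slope (deriv g) 0 s :=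
    (hslope.mono_left (nhdsWithin_mono _ (fun s hs => ne_of_gt hs))).eventually
      (eventually_gt_nhds h)
  have hpos' : ∀ᶠ s in 𝓝[>] (0:ℝ), 0 < deriv g s := by
    filter_upwards [hpos, self_mem_nhdsWithin] with s hs hs'
    have he : slope (deriv g) 0 s = s⁻¹ * deriv g s := by simp [slope, h0]
    rw [he] at hs
    have := mul_pos (show (0:ℝ) < s from hs') hs
    rwa [← mul_assoc, mul_inv_cancel₀ (ne_of_gt hs'), one_mul] at this
  obtain ⟨η, hη, hη'⟩ := (nhdsGT_basis (0:ℝ)).eventually_iff.1 hpos'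
  have hmono : StrictMonoOn g (Icc 0 η) := by
    apply strictMonoOn_of_deriv_pos (convex_Icc 0 η) hg.continuous.continuousOn
    intro s hs
    rw [interior_Icc] at hs
    exact hη' ⟨hs.1, hs.2⟩
  have : ∀ᶠ s in 𝓝[>] (0:ℝ), False := by
    filter_upwards [(hmax.filter_mono nhdsWithin_le_nhds : ∀ᶠ s in 𝓝[>] (0:ℝ), g s ≤ g 0),
      self_mem_nhdsWithin,
      Ioo_mem_nhdsGT_of_mem (by constructor <;> [rfl; exact hη] : (0:ℝ) ∈ Ico 0 η)]
      with s hle hs hsη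
    have := hmono (show (0:ℝ) ∈ Icc 0 η from ⟨le_rfl, le_of_lt hη⟩)
      ⟨le_of_lt hs, le_of_lt hsη.2⟩ hs
    linarith
  exact this.exists.elim (fun _ hf => hf)

lemma deriv_nonneg_of_max {f : ℝ → ℝ} {f' a b t : ℝ} (hat : a < t) (htb : t ≤ b)
    (hd : HasDerivAt f f' t) (hmax : ∀ s ∈ Set.Icc a b, f s ≤ f t) : 0 ≤ f' := by
  have hs : Tendsto (slope f t) (𝓝[<] t) (𝓝 f') :=
    (hasDerivAt_iff_tendsto_slope.1 hd).mono_left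
      (nhdsWithin_mono _ (fun s hs => ne_of_lt hs))
  refine ge_of_tendsto hs ?_
  have hIoi : Set.Ioi a ∈ 𝓝[<] t := nhdsWithin_le_nhds (Ioi_mem_nhds hat)
  filter_upwards [self_mem_nhdsWithin, hIoi] with s hs1 hs2
  have h1 : f s ≤ f t := hmax s ⟨le_of_lt hs2, le_trans (le_of_lt hs1) htb⟩
  have h2 : s - t < 0 := sub_neg.2 hs1
  have he : slope f t s = (f s - f t) / (s - t) := by
    simp [slope, div_eq_inv_mul, sub_ne_zero]
  rw [he]
  exact div_nonneg_of_nonpos (by linarith) h2.le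

lemma fderiv2_line {N : ℕ} {φ : EuclideanSpace ℝ (Fin N) → ℝ} (hφ : ContDiff ℝ 2 φ)
    (x v : EuclideanSpace ℝ (Fin N)) :
    fderiv ℝ (fun y => fderiv ℝ φ y v) x v
      = deriv (deriv (fun s : ℝ => φ (x + s • v))) 0 := by
  have hφ1 : Differentiable ℝ φ := hφ.differentiable (by norm_num)
  have hL : ∀ s : ℝ, HasDerivAt (fun s : ℝ => x + s • v) v s := by
    intro s
    simpa using ((hasDerivAt_id s).smul_const v).const_add x
  have hd1 : deriv (fun s : ℝ => φ (x + s • v))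
      = fun s => fderiv ℝ φ (x + s • v) v := by
    funext s
    exact (((hφ1 _).hasFDerivAt).comp_hasDerivAt s (hL s)).deriv
  rw [hd1]
  have hG : ContDiff ℝ 1 (fun y : EuclideanSpace ℝ (Fin N) => fderiv ℝ φ y v) := by
    have h1 : ContDiff ℝ 1 (fderiv ℝ φ) := hφ.fderiv_right (le_refl _)
    exact (ContinuousLinearMap.apply ℝ ℝ v).contDiff.comp h1
  have h2 := (((hG.differentiable one_ne_zero) _).hasFDerivAt).comp_hasDerivAt 0 (hL 0)
  have h3 := h2.deriv
  simp only [Function.comp_def] at h3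
  rw [h3]
  norm_num

lemma line_deriv2 {U : ℝ → ℝ} (hU : ContDiff ℝ 2 U) (a C b k c₀ c₁ c₂ : ℝ) :
    deriv (deriv (fun s => a * U s - C * Real.exp (b + k * s) - (c₀ + c₁ * s + c₂ * s ^ 2))) 0
      = a * deriv (deriv U) 0 - C * k ^ 2 * Real.exp b - 2 * c₂ := by
  have hU1 : Differentiable ℝ U := hU.differentiable (by norm_num)
  have hU2 : ContDiff ℝ 1 (deriv U) := by
    have := (contDiff_succ_iff_deriv (n := 1)).1 (hU.of_le (by norm_num) : ContDiff ℝ (1+1) U)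
    exact this.2.2
  have hexp : ∀ s : ℝ, HasDerivAt (fun s => Real.exp (b + k * s))
      (k * Real.exp (b + k * s)) s := by
    intro s
    have h1 : HasDerivAt (fun s : ℝ => b + k * s) k s := by
      simpa using ((hasDerivAt_id s).const_mul k).const_add b
    simpa [mul_comm] using h1.exp
  have hd1 : deriv (fun s => a * U s - C * Real.exp (b + k * s) - (c₀ + c₁ * s + c₂ * s ^ 2))
      = fun s => a * deriv U s - C * (k * Real.exp (b + k * s)) - (c₁ + 2 * c₂ * s) := by
    funext s
    have h1 : HasDerivAt (fun s => a * U s) (a * deriv U s) s :=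
      ((hU1 s).hasDerivAt).const_mul a
    have h2 : HasDerivAt (fun s => C * Real.exp (b + k * s))
        (C * (k * Real.exp (b + k * s))) s := (hexp s).const_mul C
    have h3 : HasDerivAt (fun s : ℝ => c₀ + c₁ * s + c₂ * s ^ 2) (c₁ + 2 * c₂ * s) s := by
      have := (((hasDerivAt_id s).const_mul c₁).const_add c₀).add
        (((hasDerivAt_pow 2 s)).const_mul c₂)
      exact this.congr_deriv (by norm_num; ring)
    exact ((h1.sub h2).sub h3).deriv
  rw [hd1]
  have h1 : HasDerivAt (fun s => a * deriv U s) (a * deriv (deriv U) 0) 0 :=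
    (((hU2.differentiable one_ne_zero) 0).hasDerivAt).const_mul a
  have h2 : HasDerivAt (fun s => C * (k * Real.exp (b + k * s)))
      (C * (k * (k * Real.exp (b + k * 0)))) 0 := ((hexp 0).const_mul k).const_mul C
  have h3 : HasDerivAt (fun s : ℝ => c₁ + 2 * c₂ * s) (2 * c₂) 0 := by
    simpa using ((hasDerivAt_id (0:ℝ)).const_mul (2*c₂)).const_add c₁
  have := ((h1.sub h2).sub h3).deriv
  rw [show deriv (fun s => a * deriv U s - C * (k * Real.exp (b + k * s)) - (c₁ + 2 * c₂ * s)) 0 = _ from this]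
  ring_nf

lemma sum_sq_eq_one {N : ℕ} {e : EuclideanSpace ℝ (Fin N)} (he : ‖e‖ = 1) :
    ∑ i : Fin N, (e i)^2 = 1 := by
  have h := EuclideanSpace.norm_eq e
  rw [he] at h
  have h2 : (1:ℝ) = ∑ i, ‖e i‖^2 := by
    rw [← Real.sq_sqrt (Finset.sum_nonneg (fun i _ => sq_nonneg ‖e i‖)), ← h]; norm_num
  simp only [Real.norm_eq_abs, sq_abs] at h2
  exact h2.symm

set_option maxHeartbeats 1000000 in
lemma comparison {N : ℕ} (ζ : ℝ) (hζ : 0 < ζ)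
    (u : ℝ → EuclideanSpace ℝ (Fin N) → ℝ)
    (hcont : ContinuousOn (Function.uncurry u)
      (Set.Ici (0:ℝ) ×ˢ (Set.univ : Set (EuclideanSpace ℝ (Fin N)))))
    (hnn : ∀ t ≥ (0:ℝ), ∀ x, 0 ≤ u t x)
    (hbdd : ∀ T > (0:ℝ), ∃ C : ℝ, ∀ t ∈ Set.Icc (0:ℝ) T, ∀ x, |u t x| ≤ C)
    (htdiff : ∀ x, ∀ t > (0:ℝ), DifferentiableAt ℝ (fun s => u s x) t)
    (hxdiff : ∀ t > (0:ℝ), ContDiff ℝ 2 (u t))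
    (hsub : ∀ t > (0:ℝ), ∀ x, deriv (fun s => u s x) t ≤ laplacian (u t) x + ζ * u t x)
    (e : EuclideanSpace ℝ (Fin N)) (he : ‖e‖ = 1) (M R : ℝ) (hM0 : 0 ≤ M)
    (hinit : ∀ x, u 0 x ≤ M * Real.exp (Real.sqrt ζ * (R - ⟪x, e⟫)))
    (t : ℝ) (ht : 0 ≤ t) (x : EuclideanSpace ℝ (Fin N)) :
    u t x ≤ M * Real.exp (2*ζ*t) * Real.exp (Real.sqrt ζ * (R - ⟪x, e⟫)) := by
  set w : ℝ → EuclideanSpace ℝ (Fin N) → ℝ :=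
    fun s y => M * Real.exp (2*ζ*s) * Real.exp (Real.sqrt ζ * (R - ⟪y, e⟫)) with hw
  show u t x ≤ w t x
  have hwnn : ∀ s y, 0 ≤ w s y := fun s y => by positivity
  -- main claim
  have key : ∀ δ > (0:ℝ), Real.exp (-ζ*t) * (u t x - w t x) ≤ δ * ((2*N+1)*t + ‖x‖^2) := by
    intro δ hδ
    set T := t + 1 with hT
    have hT0 : (0:ℝ) < T := by linarith
    obtain ⟨C, hC⟩ := hbdd T hT0
    have hC0 : (0:ℝ) ≤ C := le_trans (abs_nonneg _) (hC 0 ⟨le_rfl, hT0.le⟩ 0)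
    set ψ : ℝ → EuclideanSpace ℝ (Fin N) → ℝ :=
      fun s y => Real.exp (-ζ*s) * (u s y - w s y) - δ*((2*N+1)*s + ‖y‖^2) with hψ
    have main : ∀ s ∈ Icc (0:ℝ) T, ∀ y, ψ s y ≤ 0 := by
      by_contra hcontra
      push_neg at hcontra
      obtain ⟨t₁, ht₁, x₁, h₁⟩ := hcontra
      -- upper bound for ψ
      have hψle : ∀ s ∈ Icc (0:ℝ) T, ∀ y, ψ s y ≤ C - δ*‖y‖^2 := by
        intro s hs y
        have h1 : Real.exp (-ζ*s) ≤ 1 := by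
          rw [Real.exp_le_one_iff]
          nlinarith [hs.1]
        have h2 : u s y - w s y ≤ C :=
          le_trans (by nlinarith [hwnn s y, le_abs_self (u s y), hC s hs y]) le_rfl
        have h3 : Real.exp (-ζ*s) * (u s y - w s y) ≤ C := by
          rcases le_or_gt (u s y - w s y) 0 with hh | hh
          · exact le_trans (mul_nonpos_of_nonneg_of_nonpos (Real.exp_nonneg _) hh) hC0
          · calc Real.exp (-ζ*s) * (u s y - w s y) ≤ 1 * (u s y - w s y) :=
                mul_le_mul_of_nonneg_right h1 hh.le
              _ ≤ C := by linarith
        have h4 : δ*‖y‖^2 ≤ δ*((2*N+1)*s + ‖y‖^2) := by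
          have : (0:ℝ) ≤ (2*N+1)*s := by nlinarith [hs.1, Nat.cast_nonneg (α := ℝ) N]
          nlinarith [hs.1]
        simp only [hψ]
        linarith
      -- choose large radius
      have hρx₁' : ‖x₁‖ < max (‖x₁‖+1) (Real.sqrt ((C+1)/δ)) :=
        lt_of_lt_of_le (lt_add_one _) (le_max_left _ _)
      set ρ : ℝ := max (‖x₁‖+1) (Real.sqrt ((C+1)/δ)) with hρ
      have hρx₁ : ‖x₁‖ < ρ := hρx₁'
      have hρ0 : 0 ≤ ρ := le_trans (norm_nonneg x₁) hρx₁.le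
      have hρ2 : C + 1 ≤ δ * ρ^2 := by
        have h1 : Real.sqrt ((C+1)/δ) ≤ ρ := le_max_right _ _
        have h2 : (0:ℝ) ≤ (C+1)/δ := by positivity
        have h3 := Real.sq_sqrt h2
        have h4 : (C+1)/δ ≤ ρ^2 := by nlinarith [Real.sqrt_nonneg ((C+1)/δ)]
        rw [div_le_iff₀ hδ] at h4
        nlinarith
      have hbnd : ∀ s ∈ Icc (0:ℝ) T, ∀ y : EuclideanSpace ℝ (Fin N), ρ ≤ ‖y‖ → ψ s y < 0 := by
        intro s hs y hy
        have h5 : δ*ρ^2 ≤ δ*‖y‖^2 := by nlinarith [hδ, mul_le_mul hy hy hρ0 (norm_nonneg y)]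
        nlinarith [hψle s hs y]
      set K : Set (ℝ × EuclideanSpace ℝ (Fin N)) := Icc (0:ℝ) T ×ˢ closedBall 0 ρ with hK
      have hKc : IsCompact K := isCompact_Icc.prod (isCompact_closedBall _ _)
      have hKne : ((t₁, x₁) : ℝ × EuclideanSpace ℝ (Fin N)) ∈ K :=
        ⟨ht₁, mem_closedBall_zero_iff.2 hρx₁.le⟩
      have hcψ : ContinuousOn (fun p : ℝ × EuclideanSpace ℝ (Fin N) => ψ p.1 p.2) K := by
        have hsub' : K ⊆ (Ici (0:ℝ)) ×ˢ (univ : Set (EuclideanSpace ℝ (Fin N))) :=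
          fun p hp => ⟨hp.1.1, trivial⟩
        have h1 : ContinuousOn (fun p : ℝ × EuclideanSpace ℝ (Fin N) => u p.1 p.2) K :=
          hcont.mono hsub'
        have h2 : Continuous (fun p : ℝ × EuclideanSpace ℝ (Fin N) => w p.1 p.2) := by
          rw [hw]
          apply Continuous.mul
          · exact continuous_const.mul (Real.continuous_exp.comp (continuous_const.mul continuous_fst))
          · exact Real.continuous_exp.comp
              (continuous_const.mul (continuous_const.sub (Continuous.inner continuous_snd continuous_const)))
        have h3 : Continuous (fun p : ℝ × EuclideanSpace ℝ (Fin N) => Real.exp (-ζ*p.1)) :=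
          Real.continuous_exp.comp (continuous_const.mul continuous_fst)
        have h4 : Continuous (fun p : ℝ × EuclideanSpace ℝ (Fin N) =>
            δ*((2*N+1)*p.1 + ‖p.2‖^2)) := by
          exact continuous_const.mul ((continuous_const.mul continuous_fst).add
            ((continuous_snd.norm).pow 2))
        exact ((h3.continuousOn.mul (h1.sub h2.continuousOn)).sub h4.continuousOn)
      obtain ⟨p₀, hp₀K, hp₀max⟩ := hKc.exists_isMaxOn ⟨(t₁,x₁), hKne⟩ hcψ
      obtain ⟨t₀, x₀⟩ := p₀
      have hmax : ∀ q ∈ K, ψ q.1 q.2 ≤ ψ t₀ x₀ := fun q hq => hp₀max hq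
      have hv : 0 < ψ t₀ x₀ := lt_of_lt_of_le h₁ (hmax (t₁,x₁) hKne)
      have ht₀T : t₀ ∈ Icc (0:ℝ) T := hp₀K.1
      have hx₀ρ : ‖x₀‖ ≤ ρ := mem_closedBall_zero_iff.1 hp₀K.2
      have hx₀ : ‖x₀‖ < ρ := by
        rcases lt_or_eq_of_le hx₀ρ with h | h
        · exact h
        · exact absurd hv (not_lt.2 (hbnd t₀ ht₀T x₀ h.ge).le)
      have ht₀ : 0 < t₀ := by
        rcases eq_or_lt_of_le ht₀T.1 with h0 | h0
        · exfalso
          have hiv := hinit x₀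
          have hψ0 : ψ 0 x₀ ≤ 0 := by
            have : ψ 0 x₀ = (u 0 x₀ - M * Real.exp (Real.sqrt ζ * (R - ⟪x₀, e⟫))) - δ*‖x₀‖^2 := by
              simp [hψ, hw]
            rw [this]
            nlinarith [sq_nonneg ‖x₀‖]
          rw [← h0] at hv
          linarith
        · exact h0
      -- time derivative at the max point
      have ha : 0 < Real.exp (-ζ*t₀) := Real.exp_pos _
      have hut : HasDerivAt (fun s => u s x₀) (deriv (fun s => u s x₀) t₀) t₀ :=
        (htdiff x₀ t₀ ht₀).hasDerivAt
      have hwt : HasDerivAt (fun s => w s x₀) (2*ζ*(w t₀ x₀)) t₀ := by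
        have h1 : HasDerivAt (fun s:ℝ => 2*ζ*s) (2*ζ) t₀ := by
          simpa using (hasDerivAt_id t₀).const_mul (2*ζ)
        have h2 := (h1.exp.const_mul M).mul_const (Real.exp (Real.sqrt ζ * (R - ⟪x₀, e⟫)))
        rw [hw]
        exact h2.congr_deriv (by beta_reduce; ring)
      have hta : HasDerivAt (fun s:ℝ => Real.exp (-ζ*s)) (-ζ*Real.exp (-ζ*t₀)) t₀ := by
        have h1 : HasDerivAt (fun s:ℝ => -ζ*s) (-ζ) t₀ := by
          simpa using (hasDerivAt_id t₀).const_mul (-ζ)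
        simpa [mul_comm] using h1.exp
      have hlin : HasDerivAt (fun s:ℝ => δ*((2*(N:ℝ)+1)*s + ‖x₀‖^2)) (δ*(2*N+1)) t₀ := by
        have h1 : HasDerivAt (fun s:ℝ => (2*(N:ℝ)+1)*s + ‖x₀‖^2) (2*(N:ℝ)+1) t₀ := by
          simpa using ((hasDerivAt_id t₀).const_mul (2*(N:ℝ)+1)).add_const (‖x₀‖^2)
        simpa using h1.const_mul δ
      have hDD : HasDerivAt (fun s => ψ s x₀)
          ((-ζ*Real.exp (-ζ*t₀))*(u t₀ x₀ - w t₀ x₀)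
            + Real.exp (-ζ*t₀)*(deriv (fun s => u s x₀) t₀ - 2*ζ*(w t₀ x₀))
            - δ*(2*N+1)) t₀ := by
        have := (hta.mul (hut.sub hwt)).sub hlin
        exact this
      have h0D : 0 ≤ (-ζ*Real.exp (-ζ*t₀))*(u t₀ x₀ - w t₀ x₀)
            + Real.exp (-ζ*t₀)*(deriv (fun s => u s x₀) t₀ - 2*ζ*(w t₀ x₀))
            - δ*(2*N+1) :=
        deriv_nonneg_of_max ht₀ ht₀T.2 hDD
          (fun s hs => hmax (s,x₀) ⟨hs, mem_closedBall_zero_iff.2 hx₀ρ⟩)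
      -- spatial second derivatives at the max point
      have hC2 : ContDiff ℝ 2 (u t₀) := hxdiff t₀ ht₀
      set A := Real.exp (-ζ*t₀)*(w t₀ x₀) with hA
      have hspace : ∀ i : Fin N,
          Real.exp (-ζ*t₀) * deriv (deriv
            (fun s : ℝ => u t₀ (x₀ + s • EuclideanSpace.single i (1:ℝ)))) 0
            ≤ ζ*(e i)^2*A + 2*δ := by
        intro i
        set v := EuclideanSpace.single i (1:ℝ) with hv
        set g : ℝ → ℝ := fun s => ψ t₀ (x₀ + s • v) with hg
        have hgeq : g = fun s => Real.exp (-ζ*t₀) * u t₀ (x₀ + s • v)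
            - (Real.exp (-ζ*t₀)*(M*Real.exp (2*ζ*t₀)))
              * Real.exp ((Real.sqrt ζ*(R-⟪x₀,e⟫)) + (-(Real.sqrt ζ * e i))*s)
            - ((δ*((2*N+1)*t₀+‖x₀‖^2)) + (δ*(2*(x₀ i)))*s + δ*s^2) := by
          funext s
          have hin : ⟪x₀ + s • v, e⟫ = ⟪x₀, e⟫ + s * e i := by
            rw [hv, inner_add_left, real_inner_smul_left, EuclideanSpace.inner_single_left]
            simp
          have hnrm : ‖x₀ + s • v‖^2 = ‖x₀‖^2 + 2*(x₀ i)*s + s^2 := by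
            rw [hv, norm_add_sq_real, real_inner_smul_right, EuclideanSpace.inner_single_right,
              norm_smul, EuclideanSpace.norm_single]
            simp [mul_pow]
            ring
          have hexparg : Real.sqrt ζ * (R - (⟪x₀,e⟫ + s * e i))
              = (Real.sqrt ζ*(R-⟪x₀,e⟫)) + (-(Real.sqrt ζ * e i))*s := by ring
          simp only [hg, hψ, hw, hin, hnrm, hexparg]
          ring
        have hU : ContDiff ℝ 2 (fun s : ℝ => u t₀ (x₀ + s • v)) := by
          apply hC2.comp
          exact contDiff_const.add (contDiff_id.smul contDiff_const)
        have h2nd := line_deriv2 hU (Real.exp (-ζ*t₀)) (Real.exp (-ζ*t₀)*(M*Real.exp (2*ζ*t₀)))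
          (Real.sqrt ζ*(R-⟪x₀,e⟫)) (-(Real.sqrt ζ * e i))
          (δ*((2*N+1)*t₀+‖x₀‖^2)) (δ*(2*(x₀ i))) δ
        rw [← hgeq] at h2nd
        have hloc : IsLocalMax g 0 := by
          have hballmem : Metric.ball (0:EuclideanSpace ℝ (Fin N)) ρ ∈ 𝓝 x₀ :=
            isOpen_ball.mem_nhds (mem_ball_zero_iff.2 hx₀)
          have hclm : Continuous (fun s : ℝ => x₀ + s • v) :=
            continuous_const.add (continuous_id.smul continuous_const)
          have hpre : (fun s : ℝ => x₀ + s • v) ⁻¹' (Metric.ball 0 ρ) ∈ 𝓝 (0:ℝ) :=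
            hclm.continuousAt.preimage_mem_nhds (by simpa using hballmem)
          filter_upwards [hpre] with s hsmem
          have hle := hmax (t₀, x₀ + s•v) ⟨ht₀T, ball_subset_closedBall hsmem⟩
          simpa [hg] using hle
        have hgC2 : ContDiff ℝ 2 g := by
          rw [hgeq]
          refine ContDiff.sub (ContDiff.sub ?_ ?_) ?_
          · exact contDiff_const.mul hU
          · exact contDiff_const.mul (Real.contDiff_exp.comp
              (contDiff_const.add (contDiff_const.mul contDiff_id)))
          · exact (contDiff_const.add (contDiff_const.mul contDiff_id)).add
              (contDiff_const.mul (contDiff_id.pow 2))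
        have hgdiff : Differentiable ℝ g := hgC2.differentiable (by norm_num)
        have hgd' : DifferentiableAt ℝ (deriv g) 0 := by
          have h6 := ((contDiff_succ_iff_deriv (n:=1)).1
            (hgC2.of_le (by norm_num) : ContDiff ℝ (1+1) g)).2.2
          exact (h6.differentiable one_ne_zero).differentiableAt
        have hle0 := deriv2_nonpos_of_isLocalMax hgdiff hgd' hloc
        rw [h2nd] at hle0
        have hk2 : (-(Real.sqrt ζ * e i))^2 = ζ * (e i)^2 := by
          rw [neg_pow, mul_pow, Real.sq_sqrt hζ.le]
          ring
        rw [hk2] at hle0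
        have hWeq : Real.exp (-ζ*t₀)*(M*Real.exp (2*ζ*t₀)) * (ζ * (e i)^2)
            * Real.exp (Real.sqrt ζ*(R-⟪x₀,e⟫)) = ζ*(e i)^2*A := by
          rw [hA, hw]
          ring
        rw [hWeq] at hle0
        linarith
      -- sum over directions
      have hlapline : laplacian (u t₀) x₀ = ∑ i : Fin N, deriv (deriv
          (fun s : ℝ => u t₀ (x₀ + s • EuclideanSpace.single i (1:ℝ)))) 0 := by
        unfold laplacian
        exact Finset.sum_congr rfl (fun i _ => fderiv2_line hC2 x₀ _)
      have hsum2 : (∑ _i : Fin N, (2*δ:ℝ)) = 2*N*δ := by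
        rw [Finset.sum_const, Finset.card_univ, Fintype.card_fin, nsmul_eq_mul]
        ring
      have hsum3 : (∑ i : Fin N, ζ*(e i)^2*A) = ζ*A := by
        have h7 : (∑ i : Fin N, ζ*(e i)^2*A) = ζ*A*(∑ i : Fin N, (e i)^2) := by
          rw [Finset.mul_sum]
          exact Finset.sum_congr rfl (fun i _ => by ring)
        rw [h7, sum_sq_eq_one he, mul_one]
      have hsumineq : Real.exp (-ζ*t₀) * laplacian (u t₀) x₀
          ≤ ζ*A + 2*N*δ := by
        rw [hlapline, Finset.mul_sum]
        have h8 := Finset.sum_le_sum (fun i (_ : i ∈ Finset.univ) => hspace i)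
        rw [Finset.sum_add_distrib, hsum2, hsum3] at h8
        exact h8
      have hpde := hsub t₀ ht₀ x₀
      have hau : Real.exp (-ζ*t₀) * deriv (fun s => u s x₀) t₀
          ≤ Real.exp (-ζ*t₀)*(laplacian (u t₀) x₀) + ζ*(Real.exp (-ζ*t₀)*(u t₀ x₀)) := by
        have h9 := mul_le_mul_of_nonneg_left hpde ha.le
        nlinarith [h9]
      nlinarith [h0D, hau, hsumineq, hδ]
    have := main t ⟨ht, by linarith⟩ x
    simp only [hψ] at this
    linarith
  -- conclude from key
  by_contra hlt
  push_neg at hlt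
  have hL : 0 < Real.exp (-ζ*t) * (u t x - w t x) := by
    have := Real.exp_pos (-ζ*t)
    nlinarith
  set c₀ : ℝ := (2*N+1)*t + ‖x‖^2 with hc₀
  have hc₀0 : 0 ≤ c₀ := by nlinarith [ht, sq_nonneg ‖x‖, Nat.cast_nonneg (α := ℝ) N]
  have hδ : (0:ℝ) < Real.exp (-ζ*t) * (u t x - w t x) / (c₀ + 1) := by positivity
  have := key _ hδ
  rw [div_mul_eq_mul_div] at this
  have h2 := (le_div_iff₀ (by linarith : (0:ℝ) < c₀ + 1)).1 this
  nlinarith [hL, hc₀0]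

/-- A nonnegative subsolution of `∂ₜ u = Δu + ζu` with compactly supported
initial datum spreads at speed at most `c* = 2√ζ`: for every `c > 2√ζ`,
`sup_{|x| ≥ ct} u(t,x) → 0` as `t → ∞` (expressed in `ε`-form, using `u ≥ 0`). -/
theorem subsolution_finite_speed_of_spreading
    {N : ℕ} (hN : 0 < N) (ζ : ℝ) (hζ : 0 < ζ)
    (u : ℝ → EuclideanSpace ℝ (Fin N) → ℝ)
    (hcont : ContinuousOn (Function.uncurry u)
      (Set.Ici (0:ℝ) ×ˢ (Set.univ : Set (EuclideanSpace ℝ (Fin N)))))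
    (hnn : ∀ t ≥ (0:ℝ), ∀ x, 0 ≤ u t x)
    (hbdd : ∀ T > (0:ℝ), ∃ C : ℝ, ∀ t ∈ Set.Icc (0:ℝ) T, ∀ x, |u t x| ≤ C)
    (htdiff : ∀ x, ∀ t > (0:ℝ), DifferentiableAt ℝ (fun s => u s x) t)
    (hxdiff : ∀ t > (0:ℝ), ContDiff ℝ 2 (u t))
    (hsupp : HasCompactSupport (u 0))
    (hsub : ∀ t > (0:ℝ), ∀ x, deriv (fun s => u s x) t ≤ laplacian (u t) x + ζ * u t x) :
    ∀ c > 2 * Real.sqrt ζ, ∀ ε > (0:ℝ), ∃ t₀ : ℝ, ∀ t ≥ t₀,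
      ∀ x : EuclideanSpace ℝ (Fin N), c * t ≤ ‖x‖ → u t x ≤ ε := by
  intro c hc ε hε
  -- initial datum: supported in a ball of radius R, bounded by M
  obtain ⟨r, hr⟩ := (hsupp.isBounded).subset_closedBall 0
  set R := max r 0 with hR
  have hR0 : 0 ≤ R := le_max_right _ _
  have hsuppR : tsupport (u 0) ⊆ closedBall 0 R :=
    hr.trans (closedBall_subset_closedBall (le_max_left _ _))
  have hc0 : Continuous (u 0) := by
    have : Continuous (fun x : EuclideanSpace ℝ (Fin N) => ((0:ℝ), x)) :=
      continuous_const.prodMk continuous_id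
    exact hcont.comp_continuous this (fun x => ⟨Set.mem_Ici.mpr le_rfl, trivial⟩)
  obtain ⟨M₀, hM₀⟩ := hc0.bddAbove_range_of_hasCompactSupport hsupp
  set M := max M₀ 0 with hM
  have hM0 : 0 ≤ M := le_max_right _ _
  have hMb : ∀ y, u 0 y ≤ M :=
    fun y => le_trans (hM₀ (mem_range_self y)) (le_max_left _ _)
  -- speed gap
  have hsζ : 0 < Real.sqrt ζ := Real.sqrt_pos.2 hζ
  set β := Real.sqrt ζ * c - 2*ζ with hβ
  have hβ0 : 0 < β := by
    have h1 : Real.sqrt ζ * (2 * Real.sqrt ζ) < Real.sqrt ζ * c :=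
      mul_lt_mul_of_pos_left hc hsζ
    have h2 : Real.sqrt ζ * Real.sqrt ζ = ζ := Real.mul_self_sqrt hζ.le
    nlinarith
  refine ⟨max 1 ((Real.sqrt ζ * R - Real.log (ε/(M+1)))/β), ?_⟩
  intro t htt x hx
  have ht1 : (1:ℝ) ≤ t := le_trans (le_max_left _ _) htt
  have ht0 : (0:ℝ) ≤ t := by linarith
  have hc' : 0 < c := lt_trans (by positivity) hc
  have hxn : 0 < ‖x‖ := lt_of_lt_of_le (by nlinarith) hx
  -- unit vector in direction x
  set e : EuclideanSpace ℝ (Fin N) := ‖x‖⁻¹ • x with he'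
  have he : ‖e‖ = 1 := by
    rw [he', norm_smul, norm_inv, norm_norm, inv_mul_cancel₀ (ne_of_gt hxn)]
  have hxe : ⟪x, e⟫ = ‖x‖ := by
    rw [he', real_inner_smul_right, real_inner_self_eq_norm_sq]
    field_simp
  -- initial comparison
  have hinit : ∀ y, u 0 y ≤ M * Real.exp (Real.sqrt ζ * (R - ⟪y, e⟫)) := by
    intro y
    rcases le_or_gt (⟪y, e⟫ : ℝ) R with hyR | hyR
    · have h1 : (1:ℝ) ≤ Real.exp (Real.sqrt ζ * (R - ⟪y, e⟫)) := by
        rw [Real.one_le_exp_iff]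
        nlinarith
      nlinarith [hMb y, Real.exp_pos (Real.sqrt ζ * (R - ⟪y, e⟫))]
    · have hyn : R < ‖y‖ := by
        have := real_inner_le_norm y e
        rw [he] at this
        nlinarith [this]
      have hy0 : u 0 y = 0 := by
        apply image_eq_zero_of_notMem_tsupport
        intro hmem
        have := hsuppR hmem
        rw [mem_closedBall_zero_iff] at this
        linarith
      rw [hy0]
      positivity
  have hcomp := comparison ζ hζ u hcont hnn hbdd htdiff hxdiff hsub e he M R hM0 hinit t ht0 x
  rw [hxe] at hcomp
  -- final estimate
  have hβt : Real.sqrt ζ * R - Real.log (ε/(M+1)) ≤ β * t := by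
    have h1 : (Real.sqrt ζ * R - Real.log (ε/(M+1)))/β ≤ t := le_trans (le_max_right _ _) htt
    rw [div_le_iff₀ hβ0] at h1
    linarith [h1]
  have hexple : 2*ζ*t + Real.sqrt ζ * (R - ‖x‖) ≤ Real.log (ε/(M+1)) := by
    have h1 : Real.sqrt ζ * (c*t) ≤ Real.sqrt ζ * ‖x‖ :=
      mul_le_mul_of_nonneg_left hx hsζ.le
    have h2 : β * t = Real.sqrt ζ * (c*t) - 2*ζ*t := by rw [hβ]; ring
    nlinarith [hβt, h1]
  have hexp2 : Real.exp (2*ζ*t) * Real.exp (Real.sqrt ζ * (R - ‖x‖)) ≤ ε/(M+1) := by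
    rw [← Real.exp_add]
    calc Real.exp (2*ζ*t + Real.sqrt ζ * (R - ‖x‖)) ≤ Real.exp (Real.log (ε/(M+1))) :=
        Real.exp_le_exp.2 hexple
      _ = ε/(M+1) := Real.exp_log (by positivity)
  have hcomp' : u t x ≤ M * (Real.exp (2*ζ*t) * Real.exp (Real.sqrt ζ * (R - ‖x‖))) := by
    rw [← mul_assoc]
    exact hcomp
  have h1 : M * (Real.exp (2*ζ*t) * Real.exp (Real.sqrt ζ * (R - ‖x‖))) ≤ M * (ε/(M+1)) :=
    mul_le_mul_of_nonneg_left hexp2 hM0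
  have h2 : M * (ε/(M+1)) ≤ ε := by
    rw [mul_div_assoc', div_le_iff₀ (by positivity : (0:ℝ) < M+1)]
    nlinarith
  linarith
end
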